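/- Products and joins. Let X be an essential CAT(0) cube complex with no infinite collection of pairwise-crossing hyperplanes. (i) If there exist unbounded convex subcomplexes X_1 and X_2 with X ≅ X_1 × X_2, then there exist disjoint nonempty subcomplexes A_1, A_2 of ∂X such that ∂X ≅ A_1 ⋆ A_2, the simplicial join. (ii) If moreover X is fully visible and there exist disjoint nonempty subcomplexes A_1, A_2 of ∂X with ∂X ≅ A_1 ⋆ A_2, then there exist unbounded convex subcomplexes X_1, X_2 with X ≅ X_1 × X_2. -/

import Mathlib

/-!
Combinatorial model of a CAT(0) cube complex via Sageev duality.

`V` is the set of 0-cubes, `H` the set of hyperplanes, and `side h x : Bool`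
records which halfspace of the hyperplane `h` contains the 0-cube `x`.
The axioms say exactly that `V` is the set of consistent orientations of the
hyperplanes, each differing from a fixed one on finitely many hyperplanes;
this is precisely the combinatorial data of (the 0-skeleton of) a CAT(0) cube
complex, together with its hyperplane structure.
-/
structure CCC where
  V : Type
  H : Type
  side : H → V → Bool
  nonempty_V : Nonempty V
  vertex_ext : ∀ x y : V, (∀ h, side h x = side h y) → x = y
  sep_finite : ∀ x y : V, {h : H | side h x ≠ side h y}.Finite
  halfspace_nonempty : ∀ h b, ∃ x, side h x = b
  hyp_inj : ∀ h h' : H, (∀ x, side h x = side h' x) → h = h'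
  hyp_inj' : ∀ h h' : H, (∀ x, side h x = !(side h' x)) → h = h'
  realize : ∀ (o : H → Bool) (x : V),
    (∀ h h', ∃ y, side h y = o h ∧ side h' y = o h') →
    {h : H | o h ≠ side h x}.Finite →
    ∃ y, ∀ h, side h y = o h

namespace CCC

variable (X : CCC)

/-- The combinatorial (1-skeleton) distance between 0-cubes: the number of
separating hyperplanes. -/
noncomputable def dist (x y : X.V) : ℕ := (X.sep_finite x y).toFinset.card

/-- Two 0-cubes are adjacent (joined by a 1-cube) iff exactly one hyperplane
separates them. -/
def Adj (x y : X.V) : Prop :=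
  ∃ h, X.side h x ≠ X.side h y ∧ ∀ h', X.side h' x ≠ X.side h' y → h' = h

/-- Two hyperplanes cross iff all four quarter-spaces are nonempty. -/
def Crosses (h h' : X.H) : Prop :=
  ∀ b b' : Bool, ∃ x, X.side h x = b ∧ X.side h' x = b'

/-- The hyperplane `h'` lies in the halfspace `b` of the hyperplane `h`. -/
def InHalf (h' h : X.H) (b : Bool) : Prop :=
  h' ≠ h ∧ ∃ c : Bool, ∀ x, X.side h x = !b → X.side h' x = c

/-- `h` separates the hyperplanes `h₁` and `h₂`. -/
def SepH (h h₁ h₂ : X.H) : Prop :=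
  ∃ b : Bool, X.InHalf h₁ h b ∧ X.InHalf h₂ h (!b)

/-- Two distinct hyperplanes contact iff no third hyperplane separates them. -/
def Contact (h h' : X.H) : Prop := h ≠ h' ∧ ¬ ∃ h'', X.SepH h'' h h'

/-- A facing triple: three distinct hyperplanes, each having a halfspace
containing the other two. -/
def FacingTriple (h₁ h₂ h₃ : X.H) : Prop :=
  h₁ ≠ h₂ ∧ h₁ ≠ h₃ ∧ h₂ ≠ h₃ ∧
  ∃ b₁ b₂ b₃ : Bool,
    X.InHalf h₂ h₁ b₁ ∧ X.InHalf h₃ h₁ b₁ ∧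
    X.InHalf h₁ h₂ b₂ ∧ X.InHalf h₃ h₂ b₂ ∧
    X.InHalf h₁ h₃ b₃ ∧ X.InHalf h₂ h₃ b₃

/-- A set of hyperplanes is inseparable if every hyperplane separating two of
its members belongs to it. -/
def Inseparable (U : Set X.H) : Prop :=
  ∀ u ∈ U, ∀ u' ∈ U, ∀ h, X.SepH h u u' → h ∈ U

/-- A set of hyperplanes is unidirectional if each member has a halfspace
containing only finitely many members. -/
def Unidirectional (U : Set X.H) : Prop :=
  ∀ u ∈ U, ∃ b : Bool, {h | h ∈ U ∧ X.InHalf h u b}.Finite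

def NoFacingTriple (U : Set X.H) : Prop :=
  ∀ h₁ ∈ U, ∀ h₂ ∈ U, ∀ h₃ ∈ U, ¬ X.FacingTriple h₁ h₂ h₃

/-- A unidirectional boundary set (UBS). -/
def IsUBS (U : Set X.H) : Prop :=
  U.Infinite ∧ X.Inseparable U ∧ X.Unidirectional U ∧ X.NoFacingTriple U

/-- Almost-equivalence: finite symmetric difference. -/
def AlmostEq (U U' : Set X.H) : Prop := (symmDiff U U').Finite

/-- A minimal UBS. -/
def MinUBS (U : Set X.H) : Prop :=
  X.IsUBS U ∧ ∀ U' ⊆ U, X.IsUBS U' → X.AlmostEq U U'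

/-- The simplex (= almost-equivalence class of UBSs) represented by `U` is a
face of the simplex represented by `V`. -/
def FaceOf (U V : Set X.H) : Prop :=
  ∃ U' V', X.IsUBS U' ∧ X.IsUBS V' ∧ X.AlmostEq U U' ∧ X.AlmostEq V V' ∧ U' ⊆ V'

/-- `U` decomposes, up to almost-equivalence, into `k` pairwise disjoint
minimal UBSs; i.e. the class of `U` is a `(k-1)`-simplex of `∂X`. -/
def HasDim (U : Set X.H) (k : ℕ) : Prop :=
  ∃ 𝒰 : Fin k → Set X.H, (∀ i, X.MinUBS (𝒰 i)) ∧
    (∀ i j, i ≠ j → Disjoint (𝒰 i) (𝒰 j)) ∧ X.AlmostEq U (⋃ i, 𝒰 i)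

/-- No infinite family of pairwise-crossing hyperplanes. -/
def NoInfiniteCrossing : Prop :=
  ∀ S : Set X.H, (∀ h ∈ S, ∀ h' ∈ S, h ≠ h' → X.Crosses h h') → S.Finite

def LocallyFinite : Prop := ∀ x : X.V, {y | X.Adj x y}.Finite

/-- A combinatorial geodesic ray (parameterized by its vertices). -/
def IsGeodesicRay (γ : ℕ → X.V) : Prop :=
  ∀ m n : ℕ, m ≤ n → X.dist (γ m) (γ n) = n - m

/-- A bi-infinite combinatorial geodesic. -/
def IsGeodesicLine (α : ℤ → X.V) : Prop :=
  ∀ m n : ℤ, m ≤ n → (X.dist (α m) (α n) : ℤ) = n - m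

/-- A combinatorial geodesic segment of length `n`. -/
def IsGeodSeg (c : ℕ → X.V) (n : ℕ) : Prop :=
  ∀ i j : ℕ, i ≤ j → j ≤ n → X.dist (c i) (c j) = j - i

/-- The set of hyperplanes crossing (dual to the 1-cubes of) the path `γ`. -/
def WSet (γ : ℕ → X.V) : Set X.H :=
  {h | ∃ n : ℕ, X.side h (γ n) ≠ X.side h (γ (n+1))}

/-- The 0-cubes of the carrier `N(h)` of the hyperplane `h`. -/
def carrier (h : X.H) : Set X.V :=
  {x | ∃ y, X.Adj x y ∧ X.side h x ≠ X.side h y}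

/-- An essential hyperplane: each halfspace contains 0-cubes arbitrarily far
from the carrier. -/
def EssentialHyp (h : X.H) : Prop :=
  ∀ b : Bool, ∀ n : ℕ, ∃ x, X.side h x = b ∧ ∀ y ∈ X.carrier h, n ≤ X.dist x y

/-- Combinatorial convexity of a set of 0-cubes (the 0-skeleton of a convex
subcomplex). -/
def IsConvexSet (S : Set X.V) : Prop :=
  ∀ x ∈ S, ∀ y ∈ S, ∀ z, X.dist x z + X.dist z y = X.dist x y → z ∈ S

/-- `x` and `y` are joined by a combinatorial path avoiding `S`. -/
def ReachAvoid (S : Set X.V) (x y : X.V) : Prop :=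
  ∃ (n : ℕ) (c : ℕ → X.V), c 0 = x ∧ c n = y ∧
    (∀ i < n, X.Adj (c i) (c (i+1))) ∧ ∀ i ≤ n, c i ∉ S

/-- No compact (finite) convex subcomplex disconnects `X`. -/
def CompactlyIndecomposable : Prop :=
  ∀ K : Set X.V, K.Finite → X.IsConvexSet K →
    ∀ x y : X.V, x ∉ K → y ∉ K → X.ReachAvoid K x y

/-- `γ` bounds an eighth-flat: some eighth-flat (the subcomplex of the standard
tiling of `[0,∞)²` below the graph of an unbounded nondecreasing function)
embeds isometrically and cubically in `X` with image containing `γ`. -/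
def BoundsEighthFlat (γ : ℕ → X.V) : Prop :=
  ∃ g : ℕ → ℕ, Monotone g ∧ (∀ N : ℕ, ∃ m, N ≤ g m) ∧
    ∃ e : {p : ℕ × ℕ // p.2 ≤ g p.1} → X.V,
      (∀ p q, X.dist (e p) (e q) = Nat.dist p.1.1 q.1.1 + Nat.dist p.1.2 q.1.2) ∧
      ∀ n : ℕ, ∃ p, e p = γ n

/-- An edge-chain in the contact graph. -/
def CChain (c : ℕ → X.H) (n : ℕ) : Prop := ∀ i < n, X.Contact (c i) (c (i+1))

/-- Distance in the contact graph `C(X)` (`⊤` if there is no path). -/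
noncomputable def cdist (h h' : X.H) : ℕ∞ :=
  sInf {e : ℕ∞ | ∃ (n : ℕ) (c : ℕ → X.H), c 0 = h ∧ c n = h' ∧ X.CChain c n ∧ e = n}

/-- An edge-chain in the crossing graph. -/
def XChain (c : ℕ → X.H) (n : ℕ) : Prop := ∀ i < n, X.Crosses (c i) (c (i+1))

/-- Distance in the crossing graph `Δ(X)`. -/
noncomputable def xdist (h h' : X.H) : ℕ∞ :=
  sInf {e : ℕ∞ | ∃ (n : ℕ) (c : ℕ → X.H), c 0 = h ∧ c n = h' ∧ X.XChain c n ∧ e = n}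

/-- Distance in the full subgraph `Λ(γ)` of the contact graph spanned by the
hyperplanes crossing `γ`. -/
noncomputable def ldist (γ : ℕ → X.V) (h h' : X.H) : ℕ∞ :=
  sInf {e : ℕ∞ | ∃ (n : ℕ) (c : ℕ → X.H), c 0 = h ∧ c n = h' ∧
    (∀ i ≤ n, c i ∈ X.WSet γ) ∧ X.CChain c n ∧ e = n}

/-- Two 0-simplices of `∂X` (represented by minimal UBSs) are adjacent in the
1-skeleton of `∂X`. -/
def BAdj (U V : Set X.H) : Prop :=
  X.MinUBS U ∧ X.MinUBS V ∧ ¬ X.AlmostEq U V ∧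
    ∃ W, X.IsUBS W ∧ X.FaceOf U W ∧ X.FaceOf V W

/-- Distance in the 1-skeleton of the simplicial boundary `∂X`, between the
0-simplices represented by the minimal UBSs `U` and `V`. -/
noncomputable def bdist (U V : Set X.H) : ℕ∞ :=
  sInf {e : ℕ∞ | ∃ (n : ℕ) (c : ℕ → Set X.H),
    X.AlmostEq (c 0) U ∧ X.AlmostEq (c n) V ∧ (∀ i ≤ n, X.MinUBS (c i)) ∧
    (∀ i < n, X.BAdj (c i) (c (i+1)) ∨ X.AlmostEq (c i) (c (i+1))) ∧ e = n}

/-- Diameter of the contact graph. -/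
noncomputable def cdiam : ℕ∞ := ⨆ (h : X.H) (h' : X.H), X.cdist h h'

/-- Diameter of the crossing graph. -/
noncomputable def xdiam : ℕ∞ := ⨆ (h : X.H) (h' : X.H), X.xdist h h'

/-- Diameter of the 1-skeleton of the simplicial boundary. -/
noncomputable def bdiam : ℕ∞ :=
  ⨆ (U : Set X.H) (V : Set X.H) (_ : X.MinUBS U) (_ : X.MinUBS V), X.bdist U V

/-- A consistent orientation of the hyperplanes: any two chosen halfspaces
intersect. -/
def Consistent (χ : X.H → Bool) : Prop :=
  ∀ h h', ∃ x, X.side h x = χ h ∧ X.side h' x = χ h'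

/-- The halfspace `b` of `h`, as a set of 0-cubes. -/
def Hs (h : X.H) (b : Bool) : Set X.V := {x | X.side h x = b}

/-- Every simplex of `∂X` is visible, i.e. represented by the set of
hyperplanes crossing some combinatorial geodesic ray. -/
def FullyVisible : Prop :=
  ∀ V, X.IsUBS V → ∃ γ : ℕ → X.V, X.IsGeodesicRay γ ∧ X.AlmostEq (X.WSet γ) V

/-- The halfspace `b` of `h` is shallow: it lies within uniformly bounded
distance of the carrier of `h`. -/
def ShallowHalf (h : X.H) (b : Bool) : Prop :=
  ∃ R : ℕ, ∀ x, X.side h x = b → ∃ y ∈ X.carrier h, X.dist x y ≤ R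

/-- An `r`-avoiding combinatorial path (with respect to the basepoint `x₀`)
of length `n` from `a` to `b`. -/
def AvoidPathLen (x₀ : X.V) (r : ℕ) (a b : X.V) (n : ℕ) : Prop :=
  ∃ c : ℕ → X.V, c 0 = a ∧ c n = b ∧
    (∀ i < n, X.Adj (c i) (c (i+1))) ∧ ∀ i ≤ n, r ≤ X.dist (c i) x₀

/-- Combinatorial geodesic completeness: for every (finite) maximal family of
pairwise-crossing hyperplanes and every choice of halfspaces, the intersection
of the chosen halfspaces contains 0-cubes arbitrarily far from the
intersection of the carriers. -/
def CombGeodComplete : Prop :=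
  ∀ (n : ℕ) (W : Fin n → X.H), Function.Injective W →
    (∀ i j, i ≠ j → X.Crosses (W i) (W j)) →
    (∀ h, ¬ ∀ i, X.Crosses h (W i)) →
    ∀ χ : Fin n → Bool, ∀ R : ℕ,
      ∃ x, (∀ i, X.side (W i) x = χ i) ∧
        ∀ y, (∀ i, y ∈ X.carrier (W i)) → R ≤ X.dist x y

/-- `X` decomposes as a product of two unbounded convex subcomplexes:
equivalently, the hyperplanes split into two parts, each member of one part
crossing each member of the other, both factors being unbounded. -/
def ProductDecomp : Prop :=
  ∃ H₁ H₂ : Set X.H, Disjoint H₁ H₂ ∧ H₁ ∪ H₂ = Set.univ ∧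
    (∀ h₁ ∈ H₁, ∀ h₂ ∈ H₂, X.Crosses h₁ h₂) ∧
    (∀ n : ℕ, ∃ x y : X.V, n ≤ ({h | X.side h x ≠ X.side h y} ∩ H₁).ncard) ∧
    (∀ n : ℕ, ∃ x y : X.V, n ≤ ({h | X.side h x ≠ X.side h y} ∩ H₂).ncard)

/-- `∂X` decomposes as the simplicial join of two disjoint nonempty
subcomplexes: the 0-simplices split into two nonempty parts, any 0-simplex of
one part spanning a 1-simplex with any 0-simplex of the other. -/
def JoinDecomp : Prop :=
  ∃ 𝒜₁ 𝒜₂ : Set (Set X.H),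
    (∀ U ∈ 𝒜₁, X.MinUBS U) ∧ (∀ U ∈ 𝒜₂, X.MinUBS U) ∧
    𝒜₁.Nonempty ∧ 𝒜₂.Nonempty ∧
    (∀ U U', U ∈ 𝒜₁ → X.MinUBS U' → X.AlmostEq U U' → U' ∈ 𝒜₁) ∧
    (∀ U U', U ∈ 𝒜₂ → X.MinUBS U' → X.AlmostEq U U' → U' ∈ 𝒜₂) ∧
    (∀ U, X.MinUBS U → U ∈ 𝒜₁ ∨ U ∈ 𝒜₂) ∧
    (∀ U ∈ 𝒜₁, ∀ V ∈ 𝒜₂, ¬ X.AlmostEq U V) ∧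
    (∀ U ∈ 𝒜₁, ∀ V ∈ 𝒜₂, ∃ W, X.IsUBS W ∧ X.FaceOf U W ∧ X.FaceOf V W)

/-! Relative versions of the hyperplane notions, for a (convex) subcomplex
with 0-cube set `S`; the hyperplanes of the subcomplex are the hyperplanes of
`X` crossing it. -/

/-- `h` crosses the subcomplex with 0-cubes `S`. -/
def CrossesSet (S : Set X.V) (h : X.H) : Prop :=
  ∃ x ∈ S, ∃ y ∈ S, X.side h x ≠ X.side h y

def InHalfOn (S : Set X.V) (h' h : X.H) (b : Bool) : Prop :=
  h' ≠ h ∧ ∃ c : Bool, ∀ x ∈ S, X.side h x = !b → X.side h' x = c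

def SepHOn (S : Set X.V) (h h₁ h₂ : X.H) : Prop :=
  X.CrossesSet S h ∧ ∃ b : Bool, X.InHalfOn S h₁ h b ∧ X.InHalfOn S h₂ h (!b)

def InseparableOn (S : Set X.V) (U : Set X.H) : Prop :=
  ∀ u ∈ U, ∀ u' ∈ U, ∀ h, X.SepHOn S h u u' → h ∈ U

def UnidirectionalOn (S : Set X.V) (U : Set X.H) : Prop :=
  ∀ u ∈ U, ∃ b : Bool, {h | h ∈ U ∧ X.InHalfOn S h u b}.Finite

def NoFacingTripleOn (S : Set X.V) (U : Set X.H) : Prop :=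
  ∀ h₁ ∈ U, ∀ h₂ ∈ U, ∀ h₃ ∈ U, ¬ (h₁ ≠ h₂ ∧ h₁ ≠ h₃ ∧ h₂ ≠ h₃ ∧
    ∃ b₁ b₂ b₃ : Bool,
      X.InHalfOn S h₂ h₁ b₁ ∧ X.InHalfOn S h₃ h₁ b₁ ∧
      X.InHalfOn S h₁ h₂ b₂ ∧ X.InHalfOn S h₃ h₂ b₂ ∧
      X.InHalfOn S h₁ h₃ b₃ ∧ X.InHalfOn S h₂ h₃ b₃)

/-- A UBS of the subcomplex with 0-cube set `S`. -/
def IsUBSOn (S : Set X.V) (U : Set X.H) : Prop :=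
  (∀ h ∈ U, X.CrossesSet S h) ∧ U.Infinite ∧ X.InseparableOn S U ∧
    X.UnidirectionalOn S U ∧ X.NoFacingTripleOn S U

def MinUBSOn (S : Set X.V) (U : Set X.H) : Prop :=
  X.IsUBSOn S U ∧ ∀ U' ⊆ U, X.IsUBSOn S U' → X.AlmostEq U U'

def FaceOfOn (S : Set X.V) (U V : Set X.H) : Prop :=
  ∃ U' V', X.IsUBSOn S U' ∧ X.IsUBSOn S V' ∧ X.AlmostEq U U' ∧ X.AlmostEq V V' ∧ U' ⊆ V'

def HasDimOn (S : Set X.V) (U : Set X.H) (k : ℕ) : Prop :=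
  ∃ 𝒰 : Fin k → Set X.H, (∀ i, X.MinUBSOn S (𝒰 i)) ∧
    (∀ i j, i ≠ j → Disjoint (𝒰 i) (𝒰 j)) ∧ X.AlmostEq U (⋃ i, 𝒰 i)

end CCC

/-! ### Auxiliary development -/

namespace CCC

variable {X : CCC}

/-- Separation set. -/
def sep (X : CCC) (x y : X.V) : Set X.H := {h | X.side h x ≠ X.side h y}

lemma sep_fin (x y : X.V) : (X.sep x y).Finite := X.sep_finite x y

lemma sep_comm (x y : X.V) : X.sep x y = X.sep y x := by
  ext h; simp [sep, ne_comm]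

lemma sep_triangle (x y z : X.V) : X.sep x z ⊆ X.sep x y ∪ X.sep y z := by
  intro h hh
  by_contra hc
  simp only [sep, Set.mem_union, Set.mem_setOf_eq, not_or, not_not] at hc hh
  exact hh (hc.1.trans hc.2)

lemma mem_Hs {x : X.V} {h : X.H} {b : Bool} : x ∈ X.Hs h b ↔ X.side h x = b := Iff.rfl

lemma Hs_nonempty (h : X.H) (b : Bool) : (X.Hs h b).Nonempty := X.halfspace_nonempty h b

lemma Hs_disj {h : X.H} {b : Bool} {x : X.V} (hx : x ∈ X.Hs h b) : x ∉ X.Hs h (!b) := by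
  simp only [mem_Hs] at *
  simp [hx]

lemma Hs_cases {h : X.H} {b : Bool} (x : X.V) : x ∈ X.Hs h b ∨ x ∈ X.Hs h (!b) := by
  rcases Bool.eq_or_eq_not (X.side h x) b with h1 | h1
  · exact Or.inl h1
  · exact Or.inr h1

lemma not_mem_Hs {x : X.V} {h : X.H} {b : Bool} : x ∉ X.Hs h b ↔ x ∈ X.Hs h (!b) := by
  constructor
  · intro hx; rcases Hs_cases (h := h) (b := b) x with h1 | h1
    · exact absurd h1 hx
    · exact h1
  · intro hx hc; exact Hs_disj hc hx

/-- Equal halfspaces come from equal hyperplanes. -/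
lemma hyp_eq_of_Hs_eq {h h' : X.H} {b b' : Bool} (e : X.Hs h b = X.Hs h' b') : h = h' := by
  have key : ∀ x, (X.side h x = b) ↔ (X.side h' x = b') := fun x => Set.ext_iff.1 e x
  rcases Bool.eq_or_eq_not b' b with rfl | rfl
  · apply X.hyp_inj
    intro x
    have : ∀ a c b : Bool, ((a = b) ↔ (c = b)) → a = c := by decide
    exact this _ _ _ (key x)
  · apply X.hyp_inj'
    intro x
    have : ∀ a c b : Bool, ((a = b) ↔ (c = !b)) → a = !c := by decide
    exact this _ _ _ (key x)

lemma crosses_iff {h h' : X.H} :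
    X.Crosses h h' ↔ ∀ b b', (X.Hs h b ∩ X.Hs h' b').Nonempty := Iff.rfl

lemma Crosses.symm {h h' : X.H} (hc : X.Crosses h h') : X.Crosses h' h := by
  intro b b'
  obtain ⟨x, hx1, hx2⟩ := hc b' b
  exact ⟨x, hx2, hx1⟩

lemma not_crosses_self (h : X.H) : ¬ X.Crosses h h := by
  intro hc
  obtain ⟨x, hx1, hx2⟩ := hc true false
  simp [hx1] at hx2

lemma not_crosses_of_subset {h h' : X.H} {b b' : Bool} (hsub : X.Hs h b ⊆ X.Hs h' b') :
    ¬ X.Crosses h h' := by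
  intro hc
  obtain ⟨x, hx1, hx2⟩ := hc b (!b')
  exact Hs_disj (hsub hx1) hx2

lemma subset_of_not_crosses {h h' : X.H} (hnc : ¬ X.Crosses h h') :
    ∃ b b', X.Hs h b ⊆ X.Hs h' b' := by
  simp only [Crosses, not_forall, not_exists] at hnc
  obtain ⟨b, b', hb⟩ := hnc
  refine ⟨b, !b', fun x hx => ?_⟩
  rw [not_mem_Hs.symm]
  intro hc
  exact hb x ⟨hx, hc⟩

lemma inHalf_iff {h' h : X.H} {b : Bool} :
    X.InHalf h' h b ↔ h' ≠ h ∧ ∃ c, X.Hs h (!b) ⊆ X.Hs h' c := Iff.rfl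

lemma inHalf_of_subset {h' h : X.H} {b c : Bool} (hne : h' ≠ h)
    (hsub : X.Hs h (!b) ⊆ X.Hs h' c) : X.InHalf h' h b :=
  ⟨hne, c, fun x hx => hsub hx⟩

lemma not_inHalf_of_crosses {h' h : X.H} {b : Bool} (hc : X.Crosses h h') :
    ¬ X.InHalf h' h b := by
  rintro ⟨hne, c, hcon⟩
  obtain ⟨x, hx1, hx2⟩ := hc (!b) (!c)
  have := hcon x hx1
  simp [this] at hx2

/-- From a sandwich `Hs u bu ⊆ Hs g bg ⊆ Hs v bv` we get that `g` separates `u` from `v`. -/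
lemma sepH_of_sandwich {u g v : X.H} {bu bg bv : Bool}
    (h1 : X.Hs u bu ⊆ X.Hs g bg) (h2 : X.Hs g bg ⊆ X.Hs v bv)
    (hu : u ≠ g) (hv : v ≠ g) : X.SepH g u v := by
  refine ⟨bg, inHalf_of_subset (c := !bu) hu ?_, inHalf_of_subset (c := bv) hv ?_⟩
  · -- Hs g (!bg) ⊆ Hs u (!bu)
    intro x hx
    rw [← not_mem_Hs]
    intro hc
    exact Hs_disj (h1 hc) hx
  · -- Hs g (!(!bg)) ⊆ Hs v bv
    intro x hx
    simp only [Bool.not_not] at hx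
    exact h2 hx

lemma not_sepH_of_crosses {u v g : X.H} (hc : X.Crosses u v) : ¬ X.SepH g u v := by
  rintro ⟨b, ⟨_, c1, hcon1⟩, ⟨_, c2, hcon2⟩⟩
  obtain ⟨x, hx1, hx2⟩ := hc (!c1) (!c2)
  rcases Hs_cases (h := g) (b := b) x with h1 | h1
  · have := hcon2 x (by simpa [mem_Hs] using h1)
    simp [this] at hx2
  · have := hcon1 x h1
    simp [this] at hx1

end CCC

namespace CCC

variable {X : CCC}

/-- Boolean majority. -/
def maj (a b c : Bool) : Bool := (a && b) || (a && c) || (b && c)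

lemma median_exists (x y z : X.V) :
    ∃ m : X.V, ∀ h, X.side h m = maj (X.side h x) (X.side h y) (X.side h z) := by
  have key : ∀ a1 a2 a3 b1 b2 b3 : Bool,
      (a1 = maj a1 a2 a3 ∧ b1 = maj b1 b2 b3) ∨ (a2 = maj a1 a2 a3 ∧ b2 = maj b1 b2 b3) ∨
      (a3 = maj a1 a2 a3 ∧ b3 = maj b1 b2 b3) := by decide
  have hdiff : {h : X.H | maj (X.side h x) (X.side h y) (X.side h z) ≠ X.side h x}.Finite := by
    apply (X.sep_fin x y).subset
    intro h hh
    simp only [Set.mem_setOf_eq] at hh ⊢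
    have : ∀ a b c : Bool, maj a b c ≠ a → a ≠ b := by decide
    exact this _ _ _ hh
  obtain ⟨m, hm⟩ := X.realize
    (fun h => maj (X.side h x) (X.side h y) (X.side h z)) x
    (by
      intro h h'
      rcases key (X.side h x) (X.side h y) (X.side h z)
        (X.side h' x) (X.side h' y) (X.side h' z) with ⟨h1, h2⟩ | ⟨h1, h2⟩ | ⟨h1, h2⟩
      · exact ⟨x, h1, h2⟩
      · exact ⟨y, h1, h2⟩
      · exact ⟨z, h1, h2⟩)
    hdiff
  exact ⟨m, hm⟩

lemma bool_ne_iff {a b : Bool} : a ≠ b ↔ a = !b := by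
  cases a <;> cases b <;> simp

/-- The key "crossing edge" lemma: if `h` separates `x` from `z`, then there is an edge
dual to `h` whose near endpoint `w` satisfies `sep x w ⊆ sep x z \ {h}`. -/
lemma exists_carrier_pair :
    ∀ (n : ℕ) (x z : X.V) (h : X.H), (X.sep_fin x z).toFinset.card = n →
    X.side h x ≠ X.side h z →
    ∃ w w' : X.V, (∀ g, X.side g w ≠ X.side g w' → g = h) ∧
      X.side h w = X.side h x ∧ X.side h w' ≠ X.side h w ∧
      (∀ g, X.side g w ≠ X.side g x → (g ≠ h ∧ X.side g x ≠ X.side g z)) := by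
  intro n
  induction n using Nat.strong_induction_on with
  | _ n IH =>
    intro x z h hcard hsep
    classical
    have memS : ∀ g : X.H, g ∈ (X.sep_fin x z).toFinset ↔ X.side g x ≠ X.side g z := by
      intro g; rw [Set.Finite.mem_toFinset]; exact Iff.rfl
    have hhS : h ∈ (X.sep_fin x z).toFinset := (memS h).2 hsep
    have hSne : (((X.sep_fin x z).toFinset).image (fun g => X.Hs g (X.side g z))).Nonempty :=
      ⟨_, Finset.mem_image_of_mem _ hhS⟩
    obtain ⟨A, hA, hAmax⟩ : ∃ A ∈ ((X.sep_fin x z).toFinset).image (fun g => X.Hs g (X.side g z)),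
        ∀ B ∈ ((X.sep_fin x z).toFinset).image (fun g => X.Hs g (X.side g z)), ¬ A < B := by
      obtain ⟨A, hA⟩ := Finset.exists_maximal hSne
      exact ⟨A, hA.1, fun B hB hlt => lt_irrefl _ (lt_of_lt_of_le hlt (hA.2 hB hlt.le))⟩
    obtain ⟨m, hmS, hmA⟩ := Finset.mem_image.1 hA
    have hmsep : X.side m x ≠ X.side m z := (memS m).1 hmS
    have hmax : ∀ g ∈ (X.sep_fin x z).toFinset,
        X.Hs m (X.side m z) ⊆ X.Hs g (X.side g z) → m = g := by
      intro g hg hsub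
      by_contra hne
      have hlt : X.Hs m (X.side m z) ≠ X.Hs g (X.side g z) := by
        intro he; exact hne (hyp_eq_of_Hs_eq he)
      exact hAmax _ (Finset.mem_image_of_mem _ hg) (by rw [← hmA]; exact lt_of_le_of_ne hsub hlt)
    set o : X.H → Bool := fun g => if g = m then X.side m z else X.side g x with ho
    have main : ∀ g, g ≠ m → ∃ y, X.side m y = X.side m z ∧ X.side g y = X.side g x := by
      intro g hgne
      by_cases hgz : X.side g x = X.side g z
      · exact ⟨z, rfl, hgz.symm⟩
      · have hgS : g ∈ (X.sep_fin x z).toFinset := (memS g).2 hgz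
        by_contra hempty
        push_neg at hempty
        have hsub : X.Hs m (X.side m z) ⊆ X.Hs g (X.side g z) := by
          intro y hy
          have h1 : X.side g y ≠ X.side g x := fun hc => hempty y (mem_Hs.1 hy) hc
          rw [mem_Hs]
          rw [bool_ne_iff] at h1
          have h2 : X.side g x = !(X.side g z) := bool_ne_iff.1 hgz
          rw [h1, h2, Bool.not_not]
        exact hgne (hmax g hgS hsub).symm
    have hcons : ∀ g g', ∃ y, X.side g y = o g ∧ X.side g' y = o g' := by
      intro g g'
      by_cases hg : g = m <;> by_cases hg' : g' = m
      · subst hg; subst hg'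
        exact ⟨z, by simp [ho], by simp [ho]⟩
      · subst hg
        obtain ⟨y, hy1, hy2⟩ := main g' hg'
        exact ⟨y, by simp [ho, hy1], by simp [ho, hg', hy2]⟩
      · subst hg'
        obtain ⟨y, hy1, hy2⟩ := main g hg
        exact ⟨y, by simp [ho, hg, hy2], by simp [ho, hy1]⟩
      · exact ⟨x, by simp [ho, hg], by simp [ho, hg']⟩
    have hfin : {g : X.H | o g ≠ X.side g x}.Finite := by
      apply Set.Finite.subset (Set.finite_singleton m)
      intro g hg
      simp only [Set.mem_setOf_eq, ho] at hg
      by_contra hne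
      simp only [Set.mem_singleton_iff] at hne
      simp [hne] at hg
    obtain ⟨y, hy⟩ := X.realize o x hcons hfin
    have hym : X.side m y = X.side m z := by rw [hy]; simp [ho]
    have hyg : ∀ g, g ≠ m → X.side g y = X.side g x := by
      intro g hg; rw [hy]; simp [ho, hg]
    by_cases hhm : h = m
    · subst hhm
      refine ⟨x, y, ?_, rfl, ?_, ?_⟩
      · intro g hgd
        by_contra hgne
        exact hgd (hyg g hgne).symm
      · rw [hym]; exact fun hc => hsep hc.symm
      · intro g hgd; exact absurd rfl hgd
    · have hsepyz : X.sep y z = X.sep x z \ {m} := by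
        ext g
        simp only [sep, Set.mem_setOf_eq, Set.mem_diff, Set.mem_singleton_iff]
        by_cases hg : g = m
        · subst hg; simp [hym]
        · rw [hyg g hg]; simp [hg]
      have hcard' : (X.sep_fin y z).toFinset.card < n := by
        rw [← hcard]
        apply Finset.card_lt_card
        rw [Finset.ssubset_iff_of_subset]
        · refine ⟨m, hmS, ?_⟩
          rw [Set.Finite.mem_toFinset]
          rw [show (X.sep y z = X.sep x z \ {m}) from hsepyz] at *
          · simp [sep]
        · intro g hg
          rw [Set.Finite.mem_toFinset] at hg ⊢
          rw [hsepyz] at hg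
          exact hg.1
      have hsep' : X.side h y ≠ X.side h z := by
        rw [hyg h hhm]; exact hsep
      obtain ⟨w, w', hw1, hw2, hw3, hw4⟩ := IH _ hcard' y z h rfl hsep'
      refine ⟨w, w', hw1, by rw [hw2, hyg h hhm], hw3, ?_⟩
      intro g hgd
      by_cases hg : g = m
      · subst hg
        exact ⟨fun he => hhm he.symm, hmsep⟩
      · have hne : X.side g w ≠ X.side g y := by rw [hyg g hg]; exact hgd
        obtain ⟨h1, h2⟩ := hw4 g hne
        refine ⟨h1, ?_⟩
        rw [← hyg g hg]; exact h2

end CCC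

namespace CCC

variable {X : CCC}

lemma carrier_flip {h : X.H} {w : X.V} (hw : w ∈ X.carrier h) :
    ∃ w', X.side h w' ≠ X.side h w ∧ ∀ g, g ≠ h → X.side g w' = X.side g w := by
  obtain ⟨y, ⟨h₀, hdiff, huniq⟩, hside⟩ := hw
  have hh0 : h = h₀ := huniq h hside
  refine ⟨y, fun hc => hside hc.symm, ?_⟩
  intro g hg
  by_contra hc
  have : g = h₀ := huniq g (fun hc2 => hc hc2.symm)
  rw [← hh0] at this
  exact hg this

lemma exists_edge (h : X.H) (b : Bool) : ∃ w, w ∈ X.carrier h ∧ X.side h w = b := by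
  obtain ⟨x, hx⟩ := X.halfspace_nonempty h b
  obtain ⟨z, hz⟩ := X.halfspace_nonempty h (!b)
  have hsep : X.side h x ≠ X.side h z := by rw [hx, hz]; simp
  obtain ⟨w, w', hw1, hw2, hw3, _⟩ := exists_carrier_pair _ x z h rfl hsep
  refine ⟨w, ⟨w', ⟨h, fun hc => hw3 hc.symm, hw1⟩, fun hc => hw3 hc.symm⟩, by rw [hw2, hx]⟩

lemma median_in_carrier {h : X.H} {y₀ y₁ m : X.V} (h₀ : y₀ ∈ X.carrier h)
    (h₁ : y₁ ∈ X.carrier h) (x : X.V)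
    (hm : ∀ g, X.side g m = maj (X.side g x) (X.side g y₀) (X.side g y₁)) :
    m ∈ X.carrier h := by
  classical
  obtain ⟨y₀', hy₀1, hy₀2⟩ := carrier_flip h₀
  obtain ⟨y₁', hy₁1, hy₁2⟩ := carrier_flip h₁
  set o : X.H → Bool := fun g => if g = h then !X.side h m else X.side g m with ho
  have main : ∀ g, g ≠ h → ∃ w, X.side h w = !X.side h m ∧ X.side g w = X.side g m := by
    intro g hg
    have : X.side g m = X.side g y₀ ∨ X.side g m = X.side g y₁ := by
      rw [hm g]
      have : ∀ a b c : Bool, maj a b c = b ∨ maj a b c = c := by decide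
      exact this _ _ _
    rcases this with hgy | hgy
    · by_cases hcase : X.side h y₀ = !X.side h m
      · exact ⟨y₀, hcase, hgy.symm⟩
      · refine ⟨y₀', ?_, by rw [hy₀2 g hg]; exact hgy.symm⟩
        have h2 : X.side h y₀ = X.side h m := by
          have h3 := bool_ne_iff.1 (show X.side h y₀ ≠ !X.side h m from hcase)
          simpa using h3
        rw [bool_ne_iff.1 hy₀1, h2]
    · by_cases hcase : X.side h y₁ = !X.side h m
      · exact ⟨y₁, hcase, hgy.symm⟩
      · refine ⟨y₁', ?_, by rw [hy₁2 g hg]; exact hgy.symm⟩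
        have h2 : X.side h y₁ = X.side h m := by
          have h3 := bool_ne_iff.1 (show X.side h y₁ ≠ !X.side h m from hcase)
          simpa using h3
        rw [bool_ne_iff.1 hy₁1, h2]
  have flipwit : ∃ w, X.side h w = !X.side h m := by
    by_cases hcase : X.side h y₀ = !X.side h m
    · exact ⟨y₀, hcase⟩
    · have h2 : X.side h y₀ = X.side h m := by
        have h3 := bool_ne_iff.1 (show X.side h y₀ ≠ !X.side h m from hcase)
        simpa using h3
      exact ⟨y₀', by rw [bool_ne_iff.1 hy₀1, h2]⟩
  have hcons : ∀ g g', ∃ w, X.side g w = o g ∧ X.side g' w = o g' := by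
    intro g g'
    by_cases hg : g = h <;> by_cases hg' : g' = h
    · obtain ⟨w, hw⟩ := flipwit
      exact ⟨w, by simp [ho, hg, hw], by simp [ho, hg', hw]⟩
    · subst hg
      obtain ⟨w, hw1, hw2⟩ := main g' hg'
      exact ⟨w, by simp [ho, hw1], by simp [ho, hg', hw2]⟩
    · subst hg'
      obtain ⟨w, hw1, hw2⟩ := main g hg
      exact ⟨w, by simp [ho, hg, hw2], by simp [ho, hw1]⟩
    · exact ⟨m, by simp [ho, hg], by simp [ho, hg']⟩
  have hfin : {g : X.H | o g ≠ X.side g m}.Finite := by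
    apply Set.Finite.subset (Set.finite_singleton h)
    intro g hg
    simp only [Set.mem_setOf_eq, ho] at hg
    by_contra hne
    simp only [Set.mem_singleton_iff] at hne
    simp [hne] at hg
  obtain ⟨m', hm'⟩ := X.realize o m hcons hfin
  have hmh : X.side h m' = !X.side h m := by rw [hm']; simp [ho]
  have hmg : ∀ g, g ≠ h → X.side g m' = X.side g m := by
    intro g hg; rw [hm']; simp [ho, hg]
  refine ⟨m', ⟨h, by rw [hmh]; simp, ?_⟩, by rw [hmh]; simp⟩
  intro g hgd
  by_contra hne
  exact hgd (hmg g hne).symm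

end CCC

namespace CCC

variable {X : CCC}

lemma dist_lt_of_sep_ssubset {x m y : X.V} (hsub : X.sep x m ⊂ X.sep x y) :
    X.dist x m < X.dist x y := by
  apply Finset.card_lt_card
  constructor
  · intro g hg
    rw [Set.Finite.mem_toFinset] at hg ⊢
    exact hsub.1 hg
  · intro hc
    obtain ⟨g, hg1, hg2⟩ := Set.not_subset.1 hsub.2
    have := hc (Set.Finite.mem_toFinset _ |>.2 hg1)
    rw [Set.Finite.mem_toFinset] at this
    exact hg2 this

/-- Chain extension: inside any halfspace of an essential hyperplane there is a strictly
smaller halfspace, missing the carrier of `h`. -/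
lemma chain_extend (h : X.H) (hessh : X.EssentialHyp h) (b : Bool) :
    ∃ (h' : X.H) (b' : Bool), X.Hs h' b' ⊆ X.Hs h b ∧
      (∀ w ∈ X.carrier h, w ∉ X.Hs h' b') ∧ h' ≠ h := by
  obtain ⟨x, hxb, hxd⟩ := hessh b 1
  obtain ⟨w₀, hw₀c, hw₀b⟩ := exists_edge (X := X) h b
  -- the closest point of the carrier
  have hDne : ∃ n, ∃ y ∈ X.carrier h, X.dist x y = n := ⟨_, w₀, hw₀c, rfl⟩
  classical
  set d := Nat.find hDne with hd
  obtain ⟨y₀, hy₀c, hy₀d⟩ := Nat.find_spec hDne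
  have hmin : ∀ y ∈ X.carrier h, d ≤ X.dist x y := by
    intro y hy
    by_contra hc
    push_neg at hc
    exact Nat.find_min hDne hc ⟨y, hy, rfl⟩
  have hd1 : 1 ≤ d := by
    have := hxd y₀ hy₀c
    omega
  have hsepne : (X.sep x y₀).Nonempty := by
    by_contra hc
    rw [Set.not_nonempty_iff_eq_empty] at hc
    have : X.dist x y₀ = 0 := by
      simp only [dist]
      rw [Finset.card_eq_zero, Set.Finite.toFinset_eq_empty]
      exact hc
    omega
  obtain ⟨h', hh'⟩ := hsepne
  have hh' : X.side h' x ≠ X.side h' y₀ := hh'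
  -- Claim 1 : h' separates x from the whole carrier
  have claim1 : ∀ y ∈ X.carrier h, X.side h' y ≠ X.side h' x := by
    intro y hyc
    intro hc
    obtain ⟨m, hmm⟩ := median_exists (X := X) x y₀ y
    have hmc : m ∈ X.carrier h := median_in_carrier hy₀c hyc x hmm
    have hsub : X.sep x m ⊂ X.sep x y₀ := by
      constructor
      · intro g hg
        simp only [sep, Set.mem_setOf_eq] at hg ⊢
        rw [hmm g] at hg
        intro hgc
        apply hg
        have : ∀ a b c : Bool, a = b → a = maj a b c := by decide
        exact this _ _ _ hgc
      · intro hcon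
        have h1 : X.side h' x ≠ X.side h' m := by
          apply hcon
          exact hh'
        apply h1
        rw [hmm h']
        have h2 : X.side h' y = X.side h' x := hc
        have : ∀ a b c : Bool, c = a → a = maj a b c := by decide
        exact this _ _ _ h2
    have hlt : X.dist x m < X.dist x y₀ := dist_lt_of_sep_ssubset hsub
    rw [hy₀d] at hlt
    exact absurd (hmin m hmc) (by omega)
  have hne : h' ≠ h := by
    intro hc
    subst hc
    have := claim1 w₀ hw₀c
    rw [hw₀b, hxb] at this
    exact this rfl
  refine ⟨h', X.side h' x, ?_, ?_, hne⟩
  · -- Hs h' (side h' x) ⊆ Hs h b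
    intro z hz
    rw [mem_Hs] at hz ⊢
    by_contra hzb
    have hsep : X.side h x ≠ X.side h z := by
      rw [hxb]; exact fun hc => hzb hc.symm
    obtain ⟨w, w', hw1, hw2, hw3, hw4⟩ := exists_carrier_pair _ x z h rfl hsep
    have hwc : w ∈ X.carrier h := ⟨w', ⟨h, fun hc => hw3 hc.symm, hw1⟩, fun hc => hw3 hc.symm⟩
    have hwx : X.side h' w = X.side h' x := by
      by_contra hcon
      obtain ⟨_, h2⟩ := hw4 h' hcon
      rw [hz] at h2
      exact h2 rfl
    exact claim1 w hwc hwx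
  · intro w hwc hwmem
    rw [mem_Hs] at hwmem
    exact claim1 w hwc hwmem

end CCC

namespace CCC

variable {X : CCC}

/-- An infinite descending chain of halfspaces. -/
structure Ch (X : CCC) where
  c : ℕ → X.H
  b : ℕ → Bool
  nested : ∀ k, X.Hs (c (k+1)) (b (k+1)) ⊆ X.Hs (c k) (b k)
  distinct : Function.Injective c

namespace Ch

lemma nested_le (γ : Ch X) {j k : ℕ} (h : j ≤ k) :
    X.Hs (γ.c k) (γ.b k) ⊆ X.Hs (γ.c j) (γ.b j) := by
  induction k with
  | zero => rw [Nat.le_zero.1 h]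
  | succ n ih =>
    rcases Nat.lt_or_ge j (n+1) with h1 | h1
    · exact (γ.nested n).trans (ih (by omega))
    · rw [Nat.le_antisymm h h1]

/-- Tail of a chain. -/
def tail (γ : Ch X) (t : ℕ) : Ch X where
  c := fun k => γ.c (t + k)
  b := fun k => γ.b (t + k)
  nested := fun k => by
    have := γ.nested_le (j := t + k) (k := t + (k+1)) (by omega)
    exact this
  distinct := fun a a' ha => by
    have := γ.distinct ha; omega

end Ch

section echain

variable (hess : ∀ h : X.H, X.EssentialHyp h)

/-- One step of the essential chain. -/
noncomputable def extstep (h : X.H) (b : Bool) : X.H × Bool :=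
  ⟨(chain_extend h (hess h) b).choose, (chain_extend h (hess h) b).choose_spec.choose⟩

lemma extstep_spec (h : X.H) (b : Bool) :
    X.Hs (extstep hess h b).1 (extstep hess h b).2 ⊆ X.Hs h b ∧
    (∀ w ∈ X.carrier h, w ∉ X.Hs (extstep hess h b).1 (extstep hess h b).2) ∧
    (extstep hess h b).1 ≠ h :=
  (chain_extend h (hess h) b).choose_spec.choose_spec

/-- The essential chain from a given halfspace. -/
noncomputable def eseq (h : X.H) (b : Bool) : ℕ → X.H × Bool :=
  fun n => (fun p : X.H × Bool => extstep hess p.1 p.2)^[n] (h, b)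

lemma eseq_zero (h : X.H) (b : Bool) : eseq hess h b 0 = (h, b) := rfl

lemma eseq_succ (h : X.H) (b : Bool) (n : ℕ) :
    eseq hess h b (n+1) = extstep hess (eseq hess h b n).1 (eseq hess h b n).2 := by
  simp only [eseq, Function.iterate_succ_apply']

lemma eseq_nested (h : X.H) (b : Bool) (n : ℕ) :
    X.Hs (eseq hess h b (n+1)).1 (eseq hess h b (n+1)).2 ⊆
      X.Hs (eseq hess h b n).1 (eseq hess h b n).2 := by
  rw [eseq_succ]
  exact (extstep_spec hess _ _).1

lemma eseq_nested_le (h : X.H) (b : Bool) {j k : ℕ} (hjk : j ≤ k) :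
    X.Hs (eseq hess h b k).1 (eseq hess h b k).2 ⊆
      X.Hs (eseq hess h b j).1 (eseq hess h b j).2 := by
  induction k with
  | zero => rw [Nat.le_zero.1 hjk]
  | succ n ih =>
    rcases Nat.lt_or_ge j (n+1) with h1 | h1
    · exact (eseq_nested hess h b n).trans (ih (by omega))
    · rw [Nat.le_antisymm hjk h1]

lemma eseq_avoid (h : X.H) (b : Bool) (n : ℕ) :
    ∀ w ∈ X.carrier (eseq hess h b n).1,
      w ∉ X.Hs (eseq hess h b (n+1)).1 (eseq hess h b (n+1)).2 := by
  rw [eseq_succ]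
  exact (extstep_spec hess _ _).2.1

lemma eseq_distinct (h : X.H) (b : Bool) {j k : ℕ} (hjk : j < k) :
    (eseq hess h b j).1 ≠ (eseq hess h b k).1 := by
  intro hc
  obtain ⟨w, hwcar, hwside⟩ := exists_edge (X := X) (eseq hess h b j).1 (eseq hess h b j).2
  have hsub : X.Hs (eseq hess h b k).1 (eseq hess h b k).2 ⊆
      X.Hs (eseq hess h b (j+1)).1 (eseq hess h b (j+1)).2 := eseq_nested_le hess h b (by omega)
  rcases Bool.eq_or_eq_not (eseq hess h b k).2 (eseq hess h b j).2 with hb | hb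
  · -- same halfspace: contains a carrier point, contradiction with avoidance
    have hw : w ∈ X.Hs (eseq hess h b k).1 (eseq hess h b k).2 := by
      rw [← hc, hb]; exact hwside
    exact eseq_avoid hess h b j w hwcar (hsub hw)
  · -- opposite halfspace: contained in a disjoint set
    obtain ⟨z, hz⟩ := X.halfspace_nonempty (eseq hess h b k).1 (eseq hess h b k).2
    have hz2 : z ∈ X.Hs (eseq hess h b j).1 (eseq hess h b j).2 :=
      eseq_nested_le hess h b (le_of_lt hjk) hz
    have : z ∈ X.Hs (eseq hess h b j).1 (!(eseq hess h b j).2) := by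
      rw [mem_Hs, hc, hz, hb]
    exact Hs_disj hz2 this

/-- The essential chain as a `Ch`. -/
noncomputable def echain (h : X.H) (b : Bool) : Ch X where
  c := fun n => (eseq hess h b n).1
  b := fun n => (eseq hess h b n).2
  nested := eseq_nested hess h b
  distinct := by
    intro a a' ha
    by_contra hne
    rcases Nat.lt_or_ge a a' with h1 | h1
    · exact eseq_distinct hess h b h1 ha
    · exact eseq_distinct hess h b (by omega) ha.symm

lemma echain_zero (h : X.H) (b : Bool) : (echain hess h b).c 0 = h ∧ (echain hess h b).b 0 = b :=
  ⟨rfl, rfl⟩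

end echain

end CCC

namespace CCC

variable {X : CCC}

lemma Hs_not_not (h : X.H) (b : Bool) : X.Hs h (!!b) = X.Hs h b := by
  ext x; simp [Hs]

lemma compl_subset_compl {h h' : X.H} {b b' : Bool} (hsub : X.Hs h b ⊆ X.Hs h' b') :
    X.Hs h' (!b') ⊆ X.Hs h (!b) := by
  intro x hx
  rw [← not_mem_Hs]
  intro hc
  exact Hs_disj (hsub hc) hx

/-- The set of hyperplanes pinched between two levels of the chain `γ`. -/
def Tset (γ : Ch X) : Set X.H :=
  {g | ∃ (bg : Bool) (k k' : ℕ),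
    X.Hs (γ.c k) (γ.b k) ⊆ X.Hs g bg ∧ X.Hs g bg ⊆ X.Hs (γ.c k') (γ.b k')}

open Classical in
/-- The canonical (deep-side) orientation of a member of `Tset γ`. -/
noncomputable def orT (γ : Ch X) (g : X.H) : Bool :=
  if hg : ∃ (bg : Bool) (k k' : ℕ),
      X.Hs (γ.c k) (γ.b k) ⊆ X.Hs g bg ∧ X.Hs g bg ⊆ X.Hs (γ.c k') (γ.b k') then
    hg.choose
  else true

lemma orT_spec {γ : Ch X} {g : X.H} (hg : g ∈ Tset γ) :
    ∃ (k k' : ℕ), X.Hs (γ.c k) (γ.b k) ⊆ X.Hs g (orT γ g) ∧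
      X.Hs g (orT γ g) ⊆ X.Hs (γ.c k') (γ.b k') := by
  have hg' : ∃ (bg : Bool) (k k' : ℕ),
      X.Hs (γ.c k) (γ.b k) ⊆ X.Hs g bg ∧ X.Hs g bg ⊆ X.Hs (γ.c k') (γ.b k') := hg
  rw [orT, dif_pos hg']
  exact hg'.choose_spec

/-- The deep orientation is determined. -/
lemma or_unique {γ : Ch X} {g : X.H} {b b' : Bool}
    (h1 : ∃ k, X.Hs (γ.c k) (γ.b k) ⊆ X.Hs g b)
    (h2 : ∃ k, X.Hs (γ.c k) (γ.b k) ⊆ X.Hs g b') : b = b' := by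
  obtain ⟨k, hk⟩ := h1
  obtain ⟨k', hk'⟩ := h2
  obtain ⟨z, hz⟩ := Hs_nonempty (X := X) (γ.c (max k k')) (γ.b (max k k'))
  have z1 := hk (γ.nested_le (le_max_left k k') hz)
  have z2 := hk' (γ.nested_le (le_max_right k k') hz)
  rw [mem_Hs] at z1 z2
  rw [← z1, ← z2]

lemma orT_char {γ : Ch X} {g : X.H} {b : Bool} (hg : g ∈ Tset γ)
    (h1 : ∃ k, X.Hs (γ.c k) (γ.b k) ⊆ X.Hs g b) : orT γ g = b := by
  obtain ⟨k, k', hk, _⟩ := orT_spec hg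
  exact or_unique ⟨k, hk⟩ h1

lemma mem_Tset_chain (γ : Ch X) (k : ℕ) : γ.c k ∈ Tset γ :=
  ⟨γ.b k, k, k, le_refl _, le_refl _⟩

lemma orT_chain (γ : Ch X) (k : ℕ) : orT γ (γ.c k) = γ.b k :=
  orT_char (mem_Tset_chain γ k) ⟨k, le_refl _⟩

lemma mem_Tset_intro {γ : Ch X} {g : X.H} {bg : Bool} {k k' : ℕ}
    (h1 : X.Hs (γ.c k) (γ.b k) ⊆ X.Hs g bg)
    (h2 : X.Hs g bg ⊆ X.Hs (γ.c k') (γ.b k')) : g ∈ Tset γ ∧ orT γ g = bg :=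
  ⟨⟨bg, k, k', h1, h2⟩, orT_char ⟨bg, k, k', h1, h2⟩ ⟨k, h1⟩⟩

lemma Tset_infinite (γ : Ch X) : (Tset γ).Infinite :=
  Set.infinite_of_injective_forall_mem γ.distinct (mem_Tset_chain γ)

/-- The base point lies on the shallow side of every member of `Tset γ`. -/
lemma base_side {γ : Ch X} {g : X.H} (hg : g ∈ Tset γ) {y : X.V}
    (hy : y ∈ X.Hs (γ.c 0) (!(γ.b 0))) : y ∈ X.Hs g (!(orT γ g)) := by
  obtain ⟨k, k', _, hup⟩ := orT_spec hg
  rw [← not_mem_Hs]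
  intro hc
  have : y ∈ X.Hs (γ.c 0) (γ.b 0) := γ.nested_le (Nat.zero_le k') (hup hc)
  exact Hs_disj this hy

/-- Deep halfspaces of the chain are eventually inside every member. -/
lemma deep_side {γ : Ch X} {g : X.H} (hg : g ∈ Tset γ) :
    ∃ k, ∀ l, k ≤ l → X.Hs (γ.c l) (γ.b l) ⊆ X.Hs g (orT γ g) := by
  obtain ⟨k, k', hk, _⟩ := orT_spec hg
  exact ⟨k, fun l hl => (γ.nested_le hl).trans hk⟩

/-- Members of `Tset γ` pairwise cross or are nested (in the canonical orientations). -/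
lemma t_comp {γ : Ch X} {g g' : X.H} (hg : g ∈ Tset γ) (hg' : g' ∈ Tset γ) :
    X.Crosses g g' ∨ X.Hs g (orT γ g) ⊆ X.Hs g' (orT γ g') ∨
      X.Hs g' (orT γ g') ⊆ X.Hs g (orT γ g) := by
  by_cases hc : X.Crosses g g'
  · exact Or.inl hc
  obtain ⟨b, b', hsub⟩ := subset_of_not_crosses hc
  obtain ⟨y, hy⟩ := Hs_nonempty (X := X) (γ.c 0) (!(γ.b 0))
  obtain ⟨k, k2, hk, _⟩ := orT_spec hg
  obtain ⟨k', k2', hk', _⟩ := orT_spec hg'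
  obtain ⟨z, hz⟩ := Hs_nonempty (X := X) (γ.c (max k k')) (γ.b (max k k'))
  have z1 : z ∈ X.Hs g (orT γ g) := hk (γ.nested_le (le_max_left _ _) hz)
  have z2 : z ∈ X.Hs g' (orT γ g') := hk' (γ.nested_le (le_max_right _ _) hz)
  have y1 : y ∈ X.Hs g (!(orT γ g)) := base_side hg hy
  have y2 : y ∈ X.Hs g' (!(orT γ g')) := base_side hg' hy
  rcases Bool.eq_or_eq_not b (orT γ g) with rfl | rfl <;>
    rcases Bool.eq_or_eq_not b' (orT γ g') with rfl | rfl
  · exact Or.inr (Or.inl hsub)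
  · exact absurd (hsub z1) (Hs_disj z2)
  · exact absurd y2 (Hs_disj (hsub y1))
  · right; right
    have := compl_subset_compl hsub
    rw [Hs_not_not, Hs_not_not] at this
    exact this

/-- Members above a given member form a finite set. -/
lemma t_up_finite {γ : Ch X} {g : X.H} (hg : g ∈ Tset γ) :
    {g' | g' ∈ Tset γ ∧ X.Hs g (orT γ g) ⊆ X.Hs g' (orT γ g')}.Finite := by
  obtain ⟨y, hy⟩ := Hs_nonempty (X := X) (γ.c 0) (!(γ.b 0))
  obtain ⟨z, hz⟩ := Hs_nonempty (X := X) g (orT γ g)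
  apply (X.sep_fin y z).subset
  rintro g' ⟨hg', hsub⟩
  have h1 : X.side g' z = orT γ g' := hsub hz
  have h2 : y ∈ X.Hs g' (!(orT γ g')) := base_side hg' hy
  rw [mem_Hs] at h2
  simp only [sep, Set.mem_setOf_eq]
  rw [h1, h2]
  simp

/-- Members swallowing a fixed chain level form a finite set. -/
lemma t_swallow_finite (γ : Ch X) (J : ℕ) :
    {g | g ∈ Tset γ ∧ X.Hs (γ.c J) (γ.b J) ⊆ X.Hs g (orT γ g)}.Finite := by
  obtain ⟨y, hy⟩ := Hs_nonempty (X := X) (γ.c 0) (!(γ.b 0))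
  obtain ⟨z, hz⟩ := Hs_nonempty (X := X) (γ.c J) (γ.b J)
  apply (X.sep_fin y z).subset
  rintro g ⟨hg, hsub⟩
  have h1 : X.side g z = orT γ g := hsub hz
  have h2 : y ∈ X.Hs g (!(orT γ g)) := base_side hg hy
  rw [mem_Hs] at h2
  simp only [sep, Set.mem_setOf_eq]
  rw [h1, h2]
  simp

end CCC

namespace CCC

variable {X : CCC}

/-- `Tset γ` is inseparable. -/
lemma t_insep (γ : Ch X) : X.Inseparable (Tset γ) := by
  rintro u hu u' hu' h ⟨β, ⟨hneu, cu, hconu⟩, ⟨hneu', cu', hconu'⟩⟩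
  have hconu : X.Hs h (!β) ⊆ X.Hs u cu := hconu
  have hconu' : X.Hs h β ⊆ X.Hs u' cu' := by
    intro x hx
    exact hconu' x (by rw [mem_Hs] at hx; rw [hx]; simp)
  obtain ⟨ku, iu, hku, hiu⟩ := orT_spec hu
  obtain ⟨ku', iu', hku', hiu'⟩ := orT_spec hu'
  obtain ⟨z, hz⟩ := Hs_nonempty (X := X) (γ.c (max ku ku')) (γ.b (max ku ku'))
  have hzu : z ∈ X.Hs u (orT γ u) := hku (γ.nested_le (le_max_left _ _) hz)
  have hzu' : z ∈ X.Hs u' (orT γ u') := hku' (γ.nested_le (le_max_right _ _) hz)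
  -- helper for the impossible "both shallow" configuration
  have both_shallow : X.Hs h (!β) ⊆ X.Hs (γ.c iu) (γ.b iu) →
      X.Hs h β ⊆ X.Hs (γ.c iu') (γ.b iu') → False := by
    intro hA hB
    obtain ⟨y, hy⟩ := Hs_nonempty (X := X) (γ.c (min iu iu')) (!(γ.b (min iu iu')))
    rcases Hs_cases (h := h) (b := β) y with h1 | h1
    · have := γ.nested_le (min_le_right iu iu') (hB h1)
      exact Hs_disj this hy
    · have := γ.nested_le (min_le_left iu iu') (hA h1)
      exact Hs_disj this hy
  rcases Hs_cases (h := h) (b := β) z with h1 | h1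
  · -- z on the β side : cu' = orT u' , upper bound via hiu'
    have hcu' : cu' = orT γ u' := by
      have := hconu' h1
      rw [mem_Hs] at this hzu'
      rw [← this, hzu']
    have hupper : X.Hs h β ⊆ X.Hs (γ.c iu') (γ.b iu') := by
      intro x hx
      exact hiu' (by rw [← hcu']; exact hconu' hx)
    rcases Bool.eq_or_eq_not cu (orT γ u) with hcu | hcu
    · -- both shallow: contradiction
      exact absurd hupper (fun hu2 =>
        both_shallow (fun x hx => hiu (by rw [← hcu]; exact hconu hx)) hu2)
    · -- Hs(γ deep) ⊆ Hs h β  : h is pinched with orientation β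
      have hlow : X.Hs (γ.c (max ku ku')) (γ.b (max ku ku')) ⊆ X.Hs h β := by
        intro x hx
        rcases Hs_cases (h := h) (b := β) x with h2 | h2
        · exact h2
        · exfalso
          have hxu : x ∈ X.Hs u (orT γ u) := hku (γ.nested_le (le_max_left _ _) hx)
          have := hconu h2
          rw [hcu] at this
          exact Hs_disj hxu this
      exact ⟨β, max ku ku', iu', hlow, hupper⟩
  · -- z on the !β side : cu = orT u
    have hcu : cu = orT γ u := by
      have := hconu h1
      rw [mem_Hs] at this hzu
      rw [← this, hzu]
    have hupper : X.Hs h (!β) ⊆ X.Hs (γ.c iu) (γ.b iu) := by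
      intro x hx
      exact hiu (by rw [← hcu]; exact hconu hx)
    rcases Bool.eq_or_eq_not cu' (orT γ u') with hcu' | hcu'
    · exact absurd hupper (fun hu2 =>
        both_shallow hu2 (fun x hx => hiu' (by rw [← hcu']; exact hconu' hx)))
    · have hlow : X.Hs (γ.c (max ku ku')) (γ.b (max ku ku')) ⊆ X.Hs h (!β) := by
        intro x hx
        rcases Hs_cases (h := h) (b := β) x with h2 | h2
        · exfalso
          have hxu' : x ∈ X.Hs u' (orT γ u') := hku' (γ.nested_le (le_max_right _ _) hx)
          have := hconu' h2
          rw [hcu'] at this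
          exact Hs_disj hxu' this
        · exact h2
      exact ⟨!β, max ku ku', iu, hlow, hupper⟩

/-- `Tset γ` is unidirectional. -/
lemma t_unidir (γ : Ch X) : X.Unidirectional (Tset γ) := by
  intro u hu
  refine ⟨!(orT γ u), ?_⟩
  apply (t_up_finite hu).subset
  rintro h ⟨hhT, hne, c, hcon⟩
  have hcon : X.Hs u (!!(orT γ u)) ⊆ X.Hs h c := hcon
  rw [Hs_not_not] at hcon
  obtain ⟨ku, iu, hku, _⟩ := orT_spec hu
  obtain ⟨kh, ih, hkh, _⟩ := orT_spec hhT
  obtain ⟨z, hz⟩ := Hs_nonempty (X := X) (γ.c (max ku kh)) (γ.b (max ku kh))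
  have hzu : z ∈ X.Hs u (orT γ u) := hku (γ.nested_le (le_max_left _ _) hz)
  have hzh : z ∈ X.Hs h (orT γ h) := hkh (γ.nested_le (le_max_right _ _) hz)
  have hc : c = orT γ h := by
    have := hcon hzu
    rw [mem_Hs] at this hzh
    rw [← this, hzh]
  refine ⟨hhT, ?_⟩
  rw [← hc]
  exact hcon

/-- In a "facing" configuration the complementary halfspaces are disjoint. -/
lemma facing_subset {u v : X.H} {bu bv : Bool}
    (huv : X.InHalf v u bu) (hvu : X.InHalf u v bv) :
    X.Hs u (!bu) ⊆ X.Hs v bv := by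
  obtain ⟨hne, c, hcon⟩ := huv
  obtain ⟨hne', c', hcon'⟩ := hvu
  have hcon : X.Hs u (!bu) ⊆ X.Hs v c := hcon
  have hcon' : X.Hs v (!bv) ⊆ X.Hs u c' := hcon'
  rcases Bool.eq_or_eq_not c bv with rfl | rfl
  · exact hcon
  · exfalso
    obtain ⟨z, hz⟩ := Hs_nonempty (X := X) u (!bu)
    have hz2 : z ∈ X.Hs u c' := hcon' (hcon hz)
    have hc' : c' = !bu := by
      rw [mem_Hs] at hz hz2; rw [← hz2, hz]
    rw [hc'] at hcon'
    have : X.Hs u (!bu) = X.Hs v (!bv) := Set.Subset.antisymm hcon hcon'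
    exact hne' (hyp_eq_of_Hs_eq this)

/-- `Tset γ` has no facing triple. -/
lemma t_noFT (γ : Ch X) : X.NoFacingTriple (Tset γ) := by
  rintro h₁ hm₁ h₂ hm₂ h₃ hm₃ ⟨ne12, ne13, ne23, b₁, b₂, b₃, I21, I31, I12, I32, I13, I23⟩
  have D12 : X.Hs h₁ (!b₁) ⊆ X.Hs h₂ b₂ := facing_subset I21 I12
  have D21 : X.Hs h₂ (!b₂) ⊆ X.Hs h₁ b₁ := facing_subset I12 I21
  have D13 : X.Hs h₁ (!b₁) ⊆ X.Hs h₃ b₃ := facing_subset I31 I13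
  have D23 : X.Hs h₂ (!b₂) ⊆ X.Hs h₃ b₃ := facing_subset I32 I23
  have D31 : X.Hs h₃ (!b₃) ⊆ X.Hs h₁ b₁ := facing_subset I13 I31
  have D32 : X.Hs h₃ (!b₃) ⊆ X.Hs h₂ b₂ := facing_subset I23 I32
  obtain ⟨y, hy⟩ := Hs_nonempty (X := X) (γ.c 0) (!(γ.b 0))
  have y1 := base_side hm₁ hy
  have y2 := base_side hm₂ hy
  have y3 := base_side hm₃ hy
  obtain ⟨k₁, i₁, hk₁, _⟩ := orT_spec hm₁
  obtain ⟨k₂, i₂, hk₂, _⟩ := orT_spec hm₂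
  obtain ⟨k₃, i₃, hk₃, _⟩ := orT_spec hm₃
  set K := max k₁ (max k₂ k₃) with hK
  obtain ⟨z, hz⟩ := Hs_nonempty (X := X) (γ.c K) (γ.b K)
  have z1 : z ∈ X.Hs h₁ (orT γ h₁) := hk₁ (γ.nested_le (by omega : k₁ ≤ K) hz)
  have z2 : z ∈ X.Hs h₂ (orT γ h₂) := hk₂ (γ.nested_le (by simp [hK, le_max_iff] : k₂ ≤ K) hz)
  have z3 : z ∈ X.Hs h₃ (orT γ h₃) := hk₃ (γ.nested_le (by simp [hK, le_max_iff] : k₃ ≤ K) hz)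
  have conv : ∀ (u : X.H) (bu : Bool), z ∈ X.Hs u (orT γ u) → bu ≠ orT γ u →
      z ∈ X.Hs u (!bu) := by
    intro u bu hzu hne
    have h2 : (!bu) = orT γ u := by rw [bool_ne_iff.1 hne]; simp
    rw [h2]; exact hzu
  have yc : ∀ (u : X.H), u ∈ Tset γ → ∀ bu : Bool, bu = orT γ u → y ∈ X.Hs u (!bu) := by
    intro u hu bu hbu
    rw [hbu]; exact base_side hu hy
  have pair : ∀ (u v : X.H) (bu bv : Bool), X.Hs u (!bu) ⊆ X.Hs v bv →
      y ∈ X.Hs u (!bu) → y ∈ X.Hs v (!bv) → False := by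
    intro u v bu bv DD hyu hyv
    exact Hs_disj (DD hyu) hyv
  by_cases P1 : b₁ = orT γ h₁ <;> by_cases P2 : b₂ = orT γ h₂ <;>
    by_cases P3 : b₃ = orT γ h₃
  · exact pair _ _ _ _ D12 (yc h₁ hm₁ b₁ P1) (yc h₂ hm₂ b₂ P2)
  · exact pair _ _ _ _ D12 (yc h₁ hm₁ b₁ P1) (yc h₂ hm₂ b₂ P2)
  · exact pair _ _ _ _ D13 (yc h₁ hm₁ b₁ P1) (yc h₃ hm₃ b₃ P3)
  · exact Hs_disj (D23 (conv h₂ b₂ z2 P2)) (conv h₃ b₃ z3 P3)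
  · exact pair _ _ _ _ D23 (yc h₂ hm₂ b₂ P2) (yc h₃ hm₃ b₃ P3)
  · exact Hs_disj (D13 (conv h₁ b₁ z1 P1)) (conv h₃ b₃ z3 P3)
  · exact Hs_disj (D12 (conv h₁ b₁ z1 P1)) (conv h₂ b₂ z2 P2)
  · exact Hs_disj (D12 (conv h₁ b₁ z1 P1)) (conv h₂ b₂ z2 P2)

end CCC

namespace CCC

variable {X : CCC}

lemma Tset_isUBS (γ : Ch X) : X.IsUBS (Tset γ) :=
  ⟨Tset_infinite γ, t_insep γ, t_unidir γ, t_noFT γ⟩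

/-- A hyperplane pinched between two hyperplanes crossing `f` itself crosses `f`. -/
lemma pinched_cross {e₁ e₂ g f : X.H} {b₁ b₂ bg : Bool}
    (h1 : X.Hs e₁ b₁ ⊆ X.Hs g bg) (h2 : X.Hs g bg ⊆ X.Hs e₂ b₂)
    (c1 : X.Crosses e₁ f) (c2 : X.Crosses e₂ f) : X.Crosses g f := by
  intro a a'
  rcases Bool.eq_or_eq_not a bg with rfl | rfl
  · obtain ⟨x, hx1, hx2⟩ := c1 b₁ a'
    exact ⟨x, mem_Hs.1 (h1 hx1), hx2⟩
  · obtain ⟨x, hx1, hx2⟩ := c2 (!b₂) a'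
    have : x ∈ X.Hs g (!bg) := compl_subset_compl h2 hx1
    exact ⟨x, mem_Hs.1 this, hx2⟩

/-- Crossing window: a member of `Tset γ` poking below level `M` but not swallowing
level `m ≥ M` crosses the chain hyperplane at level `m`. -/
lemma t_window {γ : Ch X} {g : X.H} (hg : g ∈ Tset γ) {M m : ℕ} (hMm : M ≤ m)
    (hpoke : ¬ (X.Hs g (orT γ g) ⊆ X.Hs (γ.c M) (γ.b M)))
    (hnosw : ¬ (X.Hs (γ.c m) (γ.b m) ⊆ X.Hs g (orT γ g))) :
    X.Crosses g (γ.c m) := by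
  obtain ⟨kg, ig, hkg, hig⟩ := orT_spec hg
  obtain ⟨y, hy⟩ := Hs_nonempty (X := X) (γ.c 0) (!(γ.b 0))
  intro a a'
  rcases Bool.eq_or_eq_not a (orT γ g) with rfl | rfl <;>
    rcases Bool.eq_or_eq_not a' (γ.b m) with rfl | rfl
  · obtain ⟨z, hz⟩ := Hs_nonempty (X := X) (γ.c (max kg m)) (γ.b (max kg m))
    exact ⟨z, mem_Hs.1 (hkg (γ.nested_le (le_max_left _ _) hz)),
      mem_Hs.1 (γ.nested_le (le_max_right _ _) hz)⟩
  · obtain ⟨q, hq1, hq2⟩ := Set.not_subset.1 hpoke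
    have hq3 : q ∈ X.Hs (γ.c M) (!(γ.b M)) := not_mem_Hs.1 hq2
    have hq4 : q ∈ X.Hs (γ.c m) (!(γ.b m)) := compl_subset_compl (γ.nested_le hMm) hq3
    exact ⟨q, mem_Hs.1 hq1, mem_Hs.1 hq4⟩
  · obtain ⟨p, hp1, hp2⟩ := Set.not_subset.1 hnosw
    exact ⟨p, mem_Hs.1 (not_mem_Hs.1 hp2), mem_Hs.1 hp1⟩
  · have hy2 : y ∈ X.Hs g (!(orT γ g)) := base_side hg hy
    have hy3 : y ∈ X.Hs (γ.c m) (!(γ.b m)) := compl_subset_compl (γ.nested_le (Nat.zero_le m)) hy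
    exact ⟨y, mem_Hs.1 hy2, mem_Hs.1 hy3⟩

/-- Strict nesting relation in `Tset γ`. -/
def Rlt (γ : Ch X) (u v : X.H) : Prop :=
  u ≠ v ∧ X.Hs u (orT γ u) ⊆ X.Hs v (orT γ v)

lemma Rlt_trans {γ : Ch X} {u v w : X.H} (h1 : Rlt γ u v) (h2 : Rlt γ v w) : Rlt γ u w := by
  refine ⟨?_, h1.2.trans h2.2⟩
  rintro rfl
  have : X.Hs u (orT γ u) = X.Hs v (orT γ v) :=
    Set.Subset.antisymm h1.2 h2.2
  exact h1.1 (hyp_eq_of_Hs_eq this)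

lemma Rlt_irrefl {γ : Ch X} {u : X.H} : ¬ Rlt γ u u := fun h => h.1 rfl

/-- Any infinite subset of `Tset γ` contains an element with infinitely many
elements strictly below it. -/
lemma exists_pivot (hXc : X.NoInfiniteCrossing) {γ : Ch X} {S' : Set X.H}
    (hinf : S'.Infinite) (hsub : S' ⊆ Tset γ) :
    ∃ m, m ∈ S' ∧ {u | u ∈ S' ∧ Rlt γ u m}.Infinite := by
  by_contra hcon
  push_neg at hcon
  -- maximal elements
  set Max : Set X.H := {m | m ∈ S' ∧ ∀ u ∈ S', ¬ Rlt γ m u} with hMax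
  have step1 : ∀ u ∈ S', ∃ m ∈ Max, u = m ∨ Rlt γ u m := by
    intro u hu
    have hUufin : ({v | v ∈ S' ∧ Rlt γ u v} ∪ {u}).Finite := by
      apply Set.Finite.union ?_ (Set.finite_singleton u)
      apply (t_up_finite (hsub hu)).subset
      rintro v ⟨hv, hR⟩
      exact ⟨hsub hv, hR.2⟩
    have hUune : ({v | v ∈ S' ∧ Rlt γ u v} ∪ {u}).Nonempty := ⟨u, Or.inr rfl⟩
    obtain ⟨m, hmU, hmmax⟩ : ∃ m ∈ ({v | v ∈ S' ∧ Rlt γ u v} ∪ {u}),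
        ∀ v ∈ ({v | v ∈ S' ∧ Rlt γ u v} ∪ {u}),
          X.Hs m (orT γ m) ≤ X.Hs v (orT γ v) → X.Hs m (orT γ m) = X.Hs v (orT γ v) := by
      obtain ⟨m, hm⟩ := Set.Finite.exists_maximalFor
        (fun v => X.Hs v (orT γ v)) _ hUufin hUune
      exact ⟨m, hm.1, fun v hv hle => le_antisymm hle (hm.2 hv hle)⟩
    have hmS' : m ∈ S' := by
      rcases hmU with h | h
      · exact h.1
      · simp only [Set.mem_singleton_iff] at h; rw [h]; exact hu
    have hmem : u = m ∨ Rlt γ u m := by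
      rcases hmU with h | h
      · exact Or.inr h.2
      · simp only [Set.mem_singleton_iff] at h; exact Or.inl h.symm
    refine ⟨m, ⟨hmS', ?_⟩, hmem⟩
    intro v hv hRmv
    have hvU : v ∈ ({v | v ∈ S' ∧ Rlt γ u v} ∪ {u}) := by
      left
      refine ⟨hv, ?_⟩
      rcases hmem with rfl | hRum
      · exact hRmv
      · exact Rlt_trans hRum hRmv
    have := hmmax v hvU hRmv.2
    exact hRmv.1 (hyp_eq_of_Hs_eq this)
  have step2 : Max.Finite := by
    apply hXc
    intro m hm m' hm' hne
    rcases t_comp (hsub hm.1) (hsub hm'.1) with h | h | h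
    · exact h
    · exact absurd ⟨hne, h⟩ (hm.2 m' hm'.1)
    · exact absurd ⟨hne.symm, h⟩ (hm'.2 m hm.1)
  have step3 : S' ⊆ ⋃ m ∈ Max, ({u | u ∈ S' ∧ Rlt γ u m} ∪ {m}) := by
    intro u hu
    obtain ⟨m, hm, hcase⟩ := step1 u hu
    refine Set.mem_biUnion hm ?_
    rcases hcase with rfl | hR
    · exact Or.inr rfl
    · exact Or.inl ⟨hu, hR⟩
  have : S'.Finite := by
    apply Set.Finite.subset ?_ step3
    apply Set.Finite.biUnion step2
    intro m hm
    exact (hcon m hm.1).union (Set.finite_singleton m)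
  exact hinf this

/-- Extraction of an infinite descending chain from an infinite subset of `Tset γ`. -/
lemma exists_desc_chain (hXc : X.NoInfiniteCrossing) {γ : Ch X} {S : Set X.H}
    (hS : S.Infinite) (hsub : S ⊆ Tset γ) :
    ∃ δ : Ch X, (∀ k, δ.c k ∈ S) ∧ (∀ k, δ.b k = orT γ (δ.c k)) := by
  classical
  let T := {S' : Set X.H // S'.Infinite ∧ S' ⊆ S}
  have hpick : ∀ p : T, ∃ m, m ∈ p.1 ∧ {u | u ∈ p.1 ∧ Rlt γ u m}.Infinite :=
    fun p => exists_pivot hXc p.2.1 (p.2.2.trans hsub)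
  let pick : T → X.H := fun p => (hpick p).choose
  let step : T → T := fun p =>
    ⟨{u | u ∈ p.1 ∧ Rlt γ u (pick p)}, (hpick p).choose_spec.2,
      fun u hu => p.2.2 hu.1⟩
  let F : ℕ → T := fun n => step^[n] ⟨S, hS, subset_rfl⟩
  let f : ℕ → X.H := fun n => pick (F n)
  have hFsucc : ∀ n, F (n+1) = step (F n) := by
    intro n
    simp only [F, Function.iterate_succ_apply']
  have hfS : ∀ n, f n ∈ S := fun n => (F n).2.2 (hpick (F n)).choose_spec.1
  have hfR : ∀ n, Rlt γ (f (n+1)) (f n) := by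
    intro n
    have h1 : f (n+1) ∈ (F (n+1)).1 := (hpick (F (n+1))).choose_spec.1
    rw [hFsucc n] at h1
    exact h1.2
  have hchain : ∀ j k, j < k → Rlt γ (f k) (f j) := by
    intro j k hjk
    induction k with
    | zero => omega
    | succ n ih =>
      rcases Nat.lt_or_ge j n with h1 | h1
      · exact Rlt_trans (hfR n) (ih h1)
      · have : j = n := by omega
        rw [this]
        exact hfR n
  refine ⟨⟨f, fun n => orT γ (f n), fun n => (hfR n).2, ?_⟩, hfS, fun _ => rfl⟩
  intro a a' ha
  by_contra hne
  rcases Nat.lt_or_ge a a' with h1 | h1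
  · exact (hchain a a' h1).1 ha.symm
  · exact (hchain a' a (by omega)).1 ha

/-- If a chain has all members in `Tset γ` (with canonical orientations), its own
`Tset` is contained in `Tset γ`. -/
lemma Tset_mono {γ δ : Ch X} (hmem : ∀ k, δ.c k ∈ Tset γ)
    (hb : ∀ k, δ.b k = orT γ (δ.c k)) : Tset δ ⊆ Tset γ := by
  rintro g ⟨bg, k, k', h1, h2⟩
  obtain ⟨kk, ii, hkk, hii⟩ := orT_spec (hmem k)
  obtain ⟨kk', ii', hkk', hii'⟩ := orT_spec (hmem k')
  refine ⟨bg, kk, ii', ?_, ?_⟩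
  · intro x hx
    apply h1
    rw [hb k]
    exact hkk hx
  · intro x hx
    apply hii'
    rw [← hb k']
    exact h2 hx

/-- Inseparable sets capture the `Tset` of chains they contain. -/
lemma insep_capture {δ : Ch X} {S : Set X.H} (hS : X.Inseparable S)
    (hmem : ∀ k, δ.c k ∈ S) : Tset δ ⊆ S := by
  rintro g ⟨bg, k, k', h1, h2⟩
  by_cases e1 : δ.c k = g
  · rw [← e1]; exact hmem k
  by_cases e2 : δ.c k' = g
  · rw [← e2]; exact hmem k'
  exact hS _ (hmem k) _ (hmem k') g (sepH_of_sandwich h1 h2 e1 e2)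

end CCC

namespace CCC

variable {X : CCC}

lemma diff_infinite_of_not_almostEq {U S : Set X.H} (hsub : S ⊆ U)
    (hne : ¬ X.AlmostEq U S) : (U \ S).Infinite := by
  by_contra hninf
  rw [Set.not_infinite] at hninf
  have hfin := hninf
  apply hne
  unfold AlmostEq
  have : symmDiff U S = U \ S := by
    rw [Set.symmDiff_def]
    have : S \ U = ∅ := Set.diff_eq_empty.2 hsub
    rw [this]
    simp
  rw [this]
  exact hfin

/-- The key step: if `Tset γ` is not a minimal UBS, there is a sub-`Tset` all of whose
members cross a fixed member of `Tset γ`. -/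
lemma step_lemma (hXc : X.NoInfiniteCrossing) (γ : Ch X)
    (hnotmin : ¬ X.MinUBS (Tset γ)) :
    ∃ (e : X.H) (δ : Ch X), e ∈ Tset γ ∧ Tset δ ⊆ Tset γ ∧
      ∀ g ∈ Tset δ, X.Crosses g e := by
  classical
  -- get a non-equivalent sub-UBS S
  have hS : ∃ S ⊆ Tset γ, X.IsUBS S ∧ ¬ X.AlmostEq (Tset γ) S := by
    by_contra hc
    push_neg at hc
    exact hnotmin ⟨Tset_isUBS γ, fun S hsub hUBS => hc S hsub hUBS⟩
  obtain ⟨S, hsub, hSUBS, hSne⟩ := hS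
  obtain ⟨δD, hδDmem, hδDb⟩ := exists_desc_chain hXc hSUBS.1 hsub
  have hTD1 : Tset δD ⊆ S := insep_capture hSUBS.2.1 hδDmem
  have hTDmemγ : ∀ k, δD.c k ∈ Tset γ := fun k => hsub (hδDmem k)
  have hTD2 : Tset δD ⊆ Tset γ := Tset_mono hTDmemγ hδDb
  have hdiff : (Tset γ \ Tset δD).Infinite := by
    apply Set.Infinite.mono ?_ (diff_infinite_of_not_almostEq hsub hSne)
    exact Set.diff_subset_diff_right hTD1
  -- find an infinite "poking" family: an M and an infinite E' of members not
  -- contained in the halfspace at level M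
  have hmain : ∃ (M : ℕ) (E' : Set X.H), E'.Infinite ∧ E' ⊆ Tset γ ∧
      ∀ g ∈ E', ¬ (X.Hs g (orT γ g) ⊆ X.Hs (γ.c M) (γ.b M)) := by
    by_cases hcase : ∀ M : ℕ, ∃ k, X.Hs (δD.c k) (δD.b k) ⊆ X.Hs (γ.c M) (γ.b M)
    · -- unbounded pinch: the complement of Tset δD is a poking family
      obtain ⟨J₀, hJ₀⟩ : ∃ J₀, X.Hs (γ.c J₀) (γ.b J₀) ⊆ X.Hs (δD.c 0) (δD.b 0) := by
        obtain ⟨k₀, i₀, hk₀, _⟩ := orT_spec (hTDmemγ 0)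
        exact ⟨k₀, by rw [hδDb 0]; exact hk₀⟩
      refine ⟨J₀, Tset γ \ Tset δD, hdiff, Set.diff_subset, ?_⟩
      rintro g ⟨hgT, hgnot⟩ hcon
      apply hgnot
      obtain ⟨kg, ig, hkg, _⟩ := orT_spec hgT
      obtain ⟨k, hk⟩ := hcase kg
      exact ⟨orT γ g, k, 0, fun x hx => hkg (hk hx), hcon.trans hJ₀⟩
    · push_neg at hcase
      obtain ⟨M, hM⟩ := hcase
      refine ⟨M, Set.range δD.c, Set.infinite_range_of_injective δD.distinct, ?_, ?_⟩
      · rintro g ⟨k, rfl⟩; exact hTDmemγ k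
      · rintro g ⟨k, rfl⟩
        rw [← hδDb k]
        exact hM k
  obtain ⟨M, E', hE'inf, hE'sub, hE'poke⟩ := hmain
  obtain ⟨δE, hδEmem, hδEb⟩ := exists_desc_chain hXc hE'inf hE'sub
  -- find a tail avoiding the finitely many members swallowing level M+1
  have hWfin : {k : ℕ | X.Hs (γ.c (M+1)) (γ.b (M+1)) ⊆ X.Hs (δE.c k) (orT γ (δE.c k))}.Finite := by
    have h2 := (t_swallow_finite γ (M+1)).preimage
      (Set.injOn_of_injective δE.distinct
        (s := δE.c ⁻¹' {g | g ∈ Tset γ ∧ X.Hs (γ.c (M+1)) (γ.b (M+1)) ⊆ X.Hs g (orT γ g)}))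
    apply h2.subset
    intro k hk
    simp only [Set.mem_preimage, Set.mem_setOf_eq]
    exact ⟨hE'sub (hδEmem k), hk⟩
  obtain ⟨k₀, hk₀⟩ : ∃ k₀ : ℕ, ∀ k, k₀ ≤ k →
      ¬ (X.Hs (γ.c (M+1)) (γ.b (M+1)) ⊆ X.Hs (δE.c k) (orT γ (δE.c k))) := by
    obtain ⟨k₁, hk₁⟩ := hWfin.bddAbove
    refine ⟨k₁ + 1, fun k hk hcon => ?_⟩
    have := hk₁ hcon
    omega
  -- each member of the tail crosses the marker
  have hcross : ∀ k, k₀ ≤ k → X.Crosses (δE.c k) (γ.c (M+1)) := by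
    intro k hk
    exact t_window (hE'sub (hδEmem k)) (Nat.le_succ M)
      (fun hcon => hE'poke (δE.c k) (hδEmem k) hcon) (hk₀ k hk)
  refine ⟨γ.c (M+1), δE.tail k₀, mem_Tset_chain γ (M+1), ?_, ?_⟩
  · apply Tset_mono
    · intro k; exact hE'sub (hδEmem (k₀ + k))
    · intro k; exact hδEb (k₀ + k)
  · rintro g ⟨bg, k, k', h1, h2⟩
    exact pinched_cross h1 h2 (hcross (k₀ + k) (by omega)) (hcross (k₀ + k') (by omega))

end CCC

namespace CCC

variable {X : CCC}

/-- Every `Tset` contains a minimal UBS. -/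
lemma exists_minUBS_in_Tset (hXc : X.NoInfiniteCrossing) (γ₀ : Ch X) :
    ∃ U, X.MinUBS U ∧ U ⊆ Tset γ₀ := by
  classical
  by_contra hno
  push_neg at hno
  have hstep : ∀ γ : Ch X, Tset γ ⊆ Tset γ₀ →
      ∃ (e : X.H) (δ : Ch X), e ∈ Tset γ ∧ Tset δ ⊆ Tset γ ∧
        ∀ g ∈ Tset δ, X.Crosses g e := by
    intro γ hγ
    apply step_lemma hXc γ
    intro hmin
    exact hno (Tset γ) hmin hγ
  let T := {γ : Ch X // Tset γ ⊆ Tset γ₀}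
  let pick : T → X.H := fun p => (hstep p.1 p.2).choose
  let nxt : T → Ch X := fun p => (hstep p.1 p.2).choose_spec.choose
  have hspec : ∀ p : T, pick p ∈ Tset p.1 ∧ Tset (nxt p) ⊆ Tset p.1 ∧
      ∀ g ∈ Tset (nxt p), X.Crosses g (pick p) :=
    fun p => (hstep p.1 p.2).choose_spec.choose_spec
  let stp : T → T := fun p => ⟨nxt p, (hspec p).2.1.trans p.2⟩
  let F : ℕ → T := fun n => stp^[n] ⟨γ₀, subset_rfl⟩
  let em : ℕ → X.H := fun n => pick (F n)
  have hFsucc : ∀ n, F (n+1) = stp (F n) := by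
    intro n; simp only [F, Function.iterate_succ_apply']
  have hincl : ∀ n m, n ≤ m → Tset (F m).1 ⊆ Tset (F n).1 := by
    intro n m hnm
    induction m with
    | zero => rw [Nat.le_zero.1 hnm]
    | succ l ih =>
      rcases Nat.lt_or_ge n (l+1) with h1 | h1
      · have h2 : Tset (F (l+1)).1 ⊆ Tset (F l).1 := by
          rw [hFsucc l]
          exact (hspec (F l)).2.1
        exact h2.trans (ih (by omega))
      · rw [Nat.le_antisymm hnm h1]
  have hcross : ∀ n m, n < m → X.Crosses (em m) (em n) := by
    intro n m hnm
    have h1 : em m ∈ Tset (F m).1 := (hspec (F m)).1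
    have h2 : em m ∈ Tset (F (n+1)).1 := hincl (n+1) m hnm h1
    rw [hFsucc n] at h2
    exact (hspec (F n)).2.2 _ h2
  have hinj : Function.Injective em := by
    intro a b hab
    by_contra hne
    rcases Nat.lt_or_ge a b with h1 | h1
    · have := hcross a b h1
      rw [hab] at this
      exact not_crosses_self (em b) this
    · exact not_crosses_self (em b) (hab ▸ hcross b a (by omega))
  have hfin : (Set.range em).Finite := by
    apply hXc
    rintro h ⟨a, rfl⟩ h' ⟨b, rfl⟩ hne
    have hab : a ≠ b := fun hc => hne (by rw [hc])
    rcases Nat.lt_or_ge a b with h1 | h1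
    · exact (hcross a b h1).symm
    · exact hcross b a (by omega)
  exact (Set.infinite_range_of_injective hinj) hfin

end CCC

namespace CCC

variable {X : CCC}

lemma almostEq_refl (U : Set X.H) : X.AlmostEq U U := by
  unfold AlmostEq
  rw [symmDiff_self]
  exact Set.finite_empty

lemma almostEq_of_diff_finite {U S : Set X.H} (hsub : S ⊆ U) (hfin : (U \ S).Finite) :
    X.AlmostEq U S := by
  unfold AlmostEq
  have : symmDiff U S = U \ S := by
    rw [Set.symmDiff_def]
    have : S \ U = ∅ := Set.diff_eq_empty.2 hsub
    rw [this]; simp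
  rw [this]; exact hfin

/-- In a product decomposition, the part of a UBS in one factor is again a UBS
(if infinite). -/
lemma inter_isUBS {A B : Set X.H} (huniv : A ∪ B = Set.univ)
    (hcrossAB : ∀ a ∈ A, ∀ b ∈ B, X.Crosses a b) {U : Set X.H} (hU : X.IsUBS U)
    (hinf : (U ∩ A).Infinite) : X.IsUBS (U ∩ A) := by
  obtain ⟨hUinf, hUins, hUuni, hUft⟩ := hU
  refine ⟨hinf, ?_, ?_, ?_⟩
  · rintro u ⟨huU, huA⟩ u' ⟨hu'U, hu'A⟩ g hsep
    have hgU : g ∈ U := hUins u huU u' hu'U g hsep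
    refine ⟨hgU, ?_⟩
    by_contra hgA
    have hgB : g ∈ B := by
      have : g ∈ A ∪ B := huniv ▸ Set.mem_univ g
      rcases this with h | h
      · exact absurd h hgA
      · exact h
    have hcru : X.Crosses g u := (hcrossAB u huA g hgB).symm
    obtain ⟨β, hIu, _⟩ := hsep
    exact not_inHalf_of_crosses hcru hIu
  · rintro u ⟨huU, _⟩
    obtain ⟨b, hbb⟩ := hUuni u huU
    exact ⟨b, hbb.subset (fun g hg => ⟨hg.1.1, hg.2⟩)⟩
  · rintro h₁ ⟨h1U, _⟩ h₂ ⟨h2U, _⟩ h₃ ⟨h3U, _⟩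
    exact hUft h₁ h1U h₂ h2U h₃ h3U

/-- Direction (i): products give joins. -/
lemma product_to_join (hXc : X.NoInfiniteCrossing)
    (hess : ∀ h : X.H, X.EssentialHyp h) (hP : X.ProductDecomp) : X.JoinDecomp := by
  classical
  obtain ⟨H₁, H₂, hdisj, huniv, hcross, hub₁, hub₂⟩ := hP
  have hmemside : ∀ h : X.H, h ∈ H₁ ∨ h ∈ H₂ := by
    intro h
    have : h ∈ H₁ ∪ H₂ := huniv ▸ Set.mem_univ h
    exact this
  have hnot2 : ∀ h ∈ H₁, h ∉ H₂ := fun h h1 h2 => Set.disjoint_left.1 hdisj h1 h2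
  have hcross21 : ∀ h₂ ∈ H₂, ∀ h₁ ∈ H₁, X.Crosses h₂ h₁ :=
    fun b hb a ha => (hcross a ha b hb).symm
  -- nested hyperplanes are on the same side
  have hsame : ∀ (g h : X.H) (bg bh : Bool), X.Hs g bg ⊆ X.Hs h bh →
      (h ∈ H₁ → g ∈ H₁) ∧ (h ∈ H₂ → g ∈ H₂) := by
    intro g h bg bh hsub
    have hnc : ¬ X.Crosses g h := not_crosses_of_subset hsub
    constructor
    · intro hh1
      rcases hmemside g with h1 | h2
      · exact h1
      · exact absurd (hcross21 g h2 h hh1) hnc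
    · intro hh2
      rcases hmemside g with h1 | h2
      · exact absurd (hcross g h1 h hh2) hnc
      · exact h2
  -- the Tset of an essential chain from a hyperplane in H₁ lies in H₁
  have hchain_side : ∀ (h : X.H) (b : Bool),
      (h ∈ H₁ → Tset (echain hess h b) ⊆ H₁) ∧ (h ∈ H₂ → Tset (echain hess h b) ⊆ H₂) := by
    intro h b
    set γ := echain hess h b with hγ
    have hc0 : γ.c 0 = h := rfl
    have hchn : ∀ k, (h ∈ H₁ → γ.c k ∈ H₁) ∧ (h ∈ H₂ → γ.c k ∈ H₂) := by
      intro k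
      induction k with
      | zero => exact ⟨fun hh => hc0 ▸ hh, fun hh => hc0 ▸ hh⟩
      | succ n ih =>
        have hsub := γ.nested n
        exact ⟨fun hh => (hsame _ _ _ _ hsub).1 (ih.1 hh),
          fun hh => (hsame _ _ _ _ hsub).2 (ih.2 hh)⟩
    constructor
    · rintro hh g ⟨bg, k, k', h1, h2⟩
      exact (hsame g (γ.c k') bg (γ.b k') h2).1 ((hchn k').1 hh)
    · rintro hh g ⟨bg, k, k', h1, h2⟩
      exact (hsame g (γ.c k') bg (γ.b k') h2).2 ((hchn k').2 hh)
  -- nonemptiness of each side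
  have hne : ∀ (K : Set X.H), (∀ n : ℕ, ∃ x y : X.V,
      n ≤ ({h | X.side h x ≠ X.side h y} ∩ K).ncard) → ∃ h, h ∈ K := by
    intro K hK
    obtain ⟨x, y, hxy⟩ := hK 1
    have : ({h | X.side h x ≠ X.side h y} ∩ K).Nonempty := by
      rw [Set.nonempty_iff_ne_empty]
      intro hc
      rw [hc] at hxy
      simp at hxy
    obtain ⟨h, _, hK'⟩ := this
    exact ⟨h, hK'⟩
  obtain ⟨h₁, hh₁⟩ := hne H₁ hub₁
  obtain ⟨h₂, hh₂⟩ := hne H₂ hub₂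
  obtain ⟨M₁, hM₁min, hM₁sub⟩ := exists_minUBS_in_Tset hXc (echain hess h₁ true)
  obtain ⟨M₂, hM₂min, hM₂sub⟩ := exists_minUBS_in_Tset hXc (echain hess h₂ true)
  have hM₁H : M₁ ⊆ H₁ := hM₁sub.trans ((hchain_side h₁ true).1 hh₁)
  have hM₂H : M₂ ⊆ H₂ := hM₂sub.trans ((hchain_side h₂ true).2 hh₂)
  -- the two families
  refine ⟨{U | X.MinUBS U ∧ (U ∩ H₂).Finite}, {U | X.MinUBS U ∧ (U ∩ H₁).Finite},
    fun U hU => hU.1, fun U hU => hU.1, ?_, ?_, ?_, ?_, ?_, ?_, ?_⟩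
  · -- nonempty 1
    refine ⟨M₁, hM₁min, ?_⟩
    have : M₁ ∩ H₂ = ∅ := by
      rw [Set.eq_empty_iff_forall_notMem]
      rintro g ⟨hg1, hg2⟩
      exact hnot2 g (hM₁H hg1) hg2
    rw [this]; exact Set.finite_empty
  · refine ⟨M₂, hM₂min, ?_⟩
    have : M₂ ∩ H₁ = ∅ := by
      rw [Set.eq_empty_iff_forall_notMem]
      rintro g ⟨hg1, hg2⟩
      exact hnot2 g hg2 (hM₂H hg1)
    rw [this]; exact Set.finite_empty
  · -- closed under almost-equivalence 1
    rintro U U' ⟨hUmin, hUfin⟩ hU'min hUeq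
    refine ⟨hU'min, ?_⟩
    apply Set.Finite.subset (hUfin.union hUeq)
    rintro g ⟨hgU', hgH⟩
    by_cases hgU : g ∈ U
    · exact Or.inl ⟨hgU, hgH⟩
    · exact Or.inr (by rw [Set.symmDiff_def]; exact Or.inr ⟨hgU', hgU⟩)
  · rintro U U' ⟨hUmin, hUfin⟩ hU'min hUeq
    refine ⟨hU'min, ?_⟩
    apply Set.Finite.subset (hUfin.union hUeq)
    rintro g ⟨hgU', hgH⟩
    by_cases hgU : g ∈ U
    · exact Or.inl ⟨hgU, hgH⟩
    · exact Or.inr (by rw [Set.symmDiff_def]; exact Or.inr ⟨hgU', hgU⟩)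
  · -- totality
    rintro U hUmin
    by_cases hfin2 : (U ∩ H₂).Finite
    · exact Or.inl ⟨hUmin, hfin2⟩
    · right
      refine ⟨hUmin, ?_⟩
      have hUBS2 : X.IsUBS (U ∩ H₂) :=
        inter_isUBS (by rw [Set.union_comm]; exact huniv) hcross21 hUmin.1 hfin2
      have halm := hUmin.2 (U ∩ H₂) Set.inter_subset_left hUBS2
      apply Set.Finite.subset halm
      rintro g ⟨hgU, hgH1⟩
      rw [Set.symmDiff_def]
      exact Or.inl ⟨hgU, fun hc => hnot2 g hgH1 hc.2⟩
  · -- no almost-equivalence across the two sides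
    rintro U ⟨hUmin, hUf2⟩ V ⟨hVmin, hVf1⟩ heq
    have hsub : U ⊆ (U ∩ H₂) ∪ ((V ∩ H₁) ∪ symmDiff U V) := by
      intro g hg
      rcases hmemside g with h1 | h2
      · by_cases hgV : g ∈ V
        · exact Or.inr (Or.inl ⟨hgV, h1⟩)
        · exact Or.inr (Or.inr (by rw [Set.symmDiff_def]; exact Or.inl ⟨hg, hgV⟩))
      · exact Or.inl ⟨hg, h2⟩
    exact hUmin.1.1 (Set.Finite.subset (hUf2.union (hVf1.union heq)) hsub)
  · -- spanning simplices
    rintro U ⟨hUmin, hUf2⟩ V ⟨hVmin, hVf1⟩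
    have hU'inf : (U ∩ H₁).Infinite := by
      intro hfin
      apply hUmin.1.1
      apply Set.Finite.subset (hfin.union hUf2)
      intro g hg
      rcases hmemside g with h1 | h2
      · exact Or.inl ⟨hg, h1⟩
      · exact Or.inr ⟨hg, h2⟩
    have hV'inf : (V ∩ H₂).Infinite := by
      intro hfin
      apply hVmin.1.1
      apply Set.Finite.subset (hVf1.union hfin)
      intro g hg
      rcases hmemside g with h1 | h2
      · exact Or.inl ⟨hg, h1⟩
      · exact Or.inr ⟨hg, h2⟩
    have hU' : X.IsUBS (U ∩ H₁) := inter_isUBS huniv hcross hUmin.1 hU'inf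
    have hV' : X.IsUBS (V ∩ H₂) :=
      inter_isUBS (by rw [Set.union_comm]; exact huniv) hcross21 hVmin.1 hV'inf
    have kill12 : ∀ (a b : X.H) (ba : Bool), a ∈ H₁ → b ∈ H₂ → X.InHalf a b ba → False :=
      fun a b ba ha hb hI => not_inHalf_of_crosses (hcross21 b hb a ha) hI
    have kill21 : ∀ (a b : X.H) (ba : Bool), a ∈ H₂ → b ∈ H₁ → X.InHalf a b ba → False :=
      fun a b ba ha hb hI => not_inHalf_of_crosses (hcross b hb a ha) hI
    have hWUBS : X.IsUBS ((U ∩ H₁) ∪ (V ∩ H₂)) := by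
      refine ⟨hU'inf.mono Set.subset_union_left, ?_, ?_, ?_⟩
      · rintro u hu u' hu' g hsep
        rcases hu with hu | hu <;> rcases hu' with hu' | hu'
        · have hgU : g ∈ U := hUmin.1.2.1 u hu.1 u' hu'.1 g hsep
          left
          refine ⟨hgU, ?_⟩
          by_contra hgH
          have hgH2 : g ∈ H₂ := (hmemside g).resolve_left hgH
          obtain ⟨β, hI, _⟩ := hsep
          exact kill12 u g β hu.2 hgH2 hI
        · exact absurd hsep (not_sepH_of_crosses (hcross u hu.2 u' hu'.2))
        · exact absurd hsep (not_sepH_of_crosses (hcross21 u hu.2 u' hu'.2))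
        · have hgV : g ∈ V := hVmin.1.2.1 u hu.1 u' hu'.1 g hsep
          right
          refine ⟨hgV, ?_⟩
          by_contra hgH
          have hgH1 : g ∈ H₁ := (hmemside g).resolve_right hgH
          obtain ⟨β, hI, _⟩ := hsep
          exact kill21 u g β hu.2 hgH1 hI
      · rintro u (⟨huU, huH⟩ | ⟨huV, huH⟩)
        · obtain ⟨b, hb⟩ := hUmin.1.2.2.1 u huU
          refine ⟨b, hb.subset ?_⟩
          rintro g ⟨(hg | hg), hI⟩
          · exact ⟨hg.1, hI⟩
          · exact absurd hI (not_inHalf_of_crosses (hcross u huH g hg.2) )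
        · obtain ⟨b, hb⟩ := hVmin.1.2.2.1 u huV
          refine ⟨b, hb.subset ?_⟩
          rintro g ⟨(hg | hg), hI⟩
          · exact absurd hI (not_inHalf_of_crosses (hcross21 u huH g hg.2))
          · exact ⟨hg.1, hI⟩
      · rintro a ha b hb c hc ⟨nab, nac, nbc, b₁, b₂, b₃, I21, I31, I12, I32, I13, I23⟩
        rcases ha with ha | ha <;> rcases hb with hb | hb <;> rcases hc with hc | hc
        · exact hUmin.1.2.2.2 a ha.1 b hb.1 c hc.1
            ⟨nab, nac, nbc, b₁, b₂, b₃, I21, I31, I12, I32, I13, I23⟩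
        · exact kill21 c a b₁ hc.2 ha.2 I31
        · exact kill21 b a b₁ hb.2 ha.2 I21
        · exact kill21 b a b₁ hb.2 ha.2 I21
        · exact kill21 a b b₂ ha.2 hb.2 I12
        · exact kill21 a b b₂ ha.2 hb.2 I12
        · exact kill21 a c b₃ ha.2 hc.2 I13
        · exact hVmin.1.2.2.2 a ha.1 b hb.1 c hc.1
            ⟨nab, nac, nbc, b₁, b₂, b₃, I21, I31, I12, I32, I13, I23⟩
    refine ⟨(U ∩ H₁) ∪ (V ∩ H₂), hWUBS,
      ⟨U ∩ H₁, (U ∩ H₁) ∪ (V ∩ H₂), hU', hWUBS, ?_, almostEq_refl _, Set.subset_union_left⟩,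
      ⟨V ∩ H₂, (U ∩ H₁) ∪ (V ∩ H₂), hV', hWUBS, ?_, almostEq_refl _, Set.subset_union_right⟩⟩
    · apply almostEq_of_diff_finite Set.inter_subset_left
      apply hUf2.subset
      rintro g ⟨hgU, hgn⟩
      refine ⟨hgU, ?_⟩
      rcases hmemside g with h1 | h2
      · exact absurd ⟨hgU, h1⟩ hgn
      · exact h2
    · apply almostEq_of_diff_finite Set.inter_subset_left
      apply hVf1.subset
      rintro g ⟨hgV, hgn⟩
      refine ⟨hgV, ?_⟩
      rcases hmemside g with h1 | h2
      · exact h1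
      · exact absurd ⟨hgV, h2⟩ hgn

end CCC

namespace CCC

variable {X : CCC}

lemma almostEq_symm {U V : Set X.H} (h : X.AlmostEq U V) : X.AlmostEq V U := by
  unfold AlmostEq at *
  rwa [symmDiff_comm]

lemma almostEq_trans {U V W : Set X.H} (h1 : X.AlmostEq U V) (h2 : X.AlmostEq V W) :
    X.AlmostEq U W := by
  unfold AlmostEq at *
  apply Set.Finite.subset (h1.union h2)
  intro g hg
  have := symmDiff_triangle U V W
  exact this hg

lemma pinch0 {γ : Ch X} {g : X.H} (hg : g ∈ Tset γ) :
    X.Hs g (orT γ g) ⊆ X.Hs (γ.c 0) (γ.b 0) := by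
  obtain ⟨k, k', _, hup⟩ := orT_spec hg
  exact hup.trans (γ.nested_le (Nat.zero_le k'))

/-- Two minimal UBSs contained in chain-closures with disjoint top halfspaces
cannot span a common simplex. -/
lemma no_span_facing (hXc : X.NoInfiniteCrossing) {γ γ' : Ch X} {M M' : Set X.H}
    (hM : M ⊆ Tset γ) (hM' : M' ⊆ Tset γ')
    (hdisj : ∀ x, x ∈ X.Hs (γ.c 0) (γ.b 0) → x ∉ X.Hs (γ'.c 0) (γ'.b 0))
    {W : Set X.H} (hW : X.IsUBS W) (hF1 : X.FaceOf M W) (hF2 : X.FaceOf M' W) :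
    False := by
  obtain ⟨U₁, W₁, hU₁, hW₁, hMU₁, hWW₁, hsub₁⟩ := hF1
  obtain ⟨U₂, W₂, hU₂, hW₂, hM'U₂, hWW₂, hsub₂⟩ := hF2
  have hW₁₂ : X.AlmostEq W₁ W₂ := almostEq_trans (almostEq_symm hWW₁) hWW₂
  -- A := U₁ ∩ M ∩ W₂ is infinite
  have hAinf : (U₁ \ (symmDiff M U₁ ∪ symmDiff W₁ W₂)).Infinite :=
    hU₁.1.diff (hMU₁.union hW₁₂)
  have hAsub : U₁ \ (symmDiff M U₁ ∪ symmDiff W₁ W₂) ⊆ M ∩ W₂ := by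
    rintro g ⟨hgU, hgn⟩
    rw [Set.mem_union] at hgn
    push_neg at hgn
    constructor
    · by_contra hgM
      exact hgn.1 (by rw [Set.symmDiff_def]; exact Or.inr ⟨hgU, hgM⟩)
    · by_contra hgW₂
      exact hgn.2 (by rw [Set.symmDiff_def]; exact Or.inl ⟨hsub₁ hgU, hgW₂⟩)
  -- B := U₂ ∩ M' is infinite and inside W₂
  have hBinf : (U₂ \ symmDiff M' U₂).Infinite := hU₂.1.diff hM'U₂
  have hBsub : U₂ \ symmDiff M' U₂ ⊆ M' ∩ W₂ := by
    rintro g ⟨hgU, hgn⟩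
    constructor
    · by_contra hgM
      exact hgn (by rw [Set.symmDiff_def]; exact Or.inr ⟨hgU, hgM⟩)
    · exact hsub₂ hgU
  set A := U₁ \ (symmDiff M U₁ ∪ symmDiff W₁ W₂) with hA
  set B := U₂ \ symmDiff M' U₂ with hB
  -- descending chain in A
  obtain ⟨δ, hδmem, hδb⟩ := exists_desc_chain hXc hAinf (fun g hg => hM (hAsub hg).1)
  set a₀ := δ.c 0 with ha₀
  have ha₀W₂ : a₀ ∈ W₂ := (hAsub (hδmem 0)).2
  have ha₀T : a₀ ∈ Tset γ := hM (hAsub (hδmem 0)).1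
  -- the deep side of a₀ contains infinitely many members of W₂
  have hdeepside : {g | g ∈ W₂ ∧ X.InHalf g a₀ (orT γ a₀)}.Infinite := by
    apply Set.infinite_of_injective_forall_mem
      (f := fun k : ℕ => δ.c (k+1)) (fun i j hij => by have := δ.distinct hij; omega)
    intro k
    refine ⟨(hAsub (hδmem (k+1))).2, ?_⟩
    have hnest : X.Hs (δ.c (k+1)) (orT γ (δ.c (k+1))) ⊆ X.Hs a₀ (orT γ a₀) := by
      have h0 := δ.nested_le (Nat.zero_le (k+1))
      rwa [hδb (k+1), hδb 0] at h0
    apply inHalf_of_subset (c := !(orT γ (δ.c (k+1))))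
      (fun hc => by have := δ.distinct hc; omega)
    exact fun x hx => compl_subset_compl hnest hx
  -- the near side of a₀ also contains infinitely many members of W₂
  have hnearside : {g | g ∈ W₂ ∧ X.InHalf g a₀ (!(orT γ a₀))}.Infinite := by
    apply Set.Infinite.mono ?_ (hBinf.diff (Set.finite_singleton a₀))
    rintro g ⟨hgB, hgne⟩
    simp only [Set.mem_singleton_iff] at hgne
    refine ⟨(hBsub hgB).2, ?_⟩
    have hgT' : g ∈ Tset γ' := hM' (hBsub hgB).1
    apply inHalf_of_subset (c := !(orT γ' g)) hgne
    intro x hx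
    rw [Hs_not_not] at hx
    rw [← not_mem_Hs]
    intro hc
    exact hdisj x (pinch0 ha₀T hx) (pinch0 hgT' hc)
  obtain ⟨bb, hbfin⟩ := hW₂.2.2.1 a₀ ha₀W₂
  rcases Bool.eq_or_eq_not bb (orT γ a₀) with rfl | rfl
  · exact hdeepside hbfin
  · exact hnearside hbfin

end CCC

namespace CCC

lemma inf_pigeon {C : Type} [Finite C] {S : Set ℕ} (hS : S.Infinite) (f : ℕ → C) :
    ∃ c, {n | n ∈ S ∧ f n = c}.Infinite := by
  by_contra hc
  push_neg at hc
  have hsub : S ⊆ ⋃ c : C, {n | n ∈ S ∧ f n = c} := fun n hn => Set.mem_iUnion.2 ⟨f n, hn, rfl⟩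
  exact hS ((Set.finite_iUnion hc).subset hsub)

/-- Infinite Ramsey theorem for pairs with finitely many colours. -/
lemma inf_ramsey_pairs {C : Type} [Finite C] (col : ℕ → ℕ → C) :
    ∃ a : ℕ → ℕ, StrictMono a ∧ ∃ c, ∀ i j, i < j → col (a i) (a j) = c := by
  classical
  let St := {q : ℕ × Set ℕ // q.2.Infinite ∧ ∀ m ∈ q.2, q.1 < m}
  have hstep : ∀ p : St, ∃ (c : C) (p' : St), p.1.1 < p'.1.1 ∧ p'.1.2 ⊆ p.1.2 ∧
      p'.1.1 ∈ p.1.2 ∧ (∀ m ∈ p'.1.2, col p.1.1 m = c) ∧ col p.1.1 p'.1.1 = c := by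
    rintro ⟨⟨n, S⟩, hSinf, hSgt⟩
    obtain ⟨c, hc⟩ := inf_pigeon hSinf (col n)
    obtain ⟨n', hn'⟩ := hc.nonempty
    have hnewinf : ({m | m ∈ S ∧ col n m = c} \ {m | m ≤ n'}).Infinite :=
      hc.diff (Set.finite_le_nat n')
    refine ⟨c, ⟨⟨n', {m | m ∈ S ∧ col n m = c} \ {m | m ≤ n'}⟩, hnewinf, ?_⟩,
      hSgt n' hn'.1, ?_, hn'.1, ?_, hn'.2⟩
    · rintro m ⟨_, hm2⟩
      simp only [Set.mem_setOf_eq] at hm2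
      omega
    · rintro m ⟨hm1, _⟩
      exact hm1.1
    · rintro m ⟨hm1, _⟩
      exact hm1.2
  let pickc : St → C := fun p => (hstep p).choose
  let stp : St → St := fun p => (hstep p).choose_spec.choose
  have hspec : ∀ p : St, p.1.1 < (stp p).1.1 ∧ (stp p).1.2 ⊆ p.1.2 ∧
      (stp p).1.1 ∈ p.1.2 ∧
      (∀ m ∈ (stp p).1.2, col p.1.1 m = pickc p) ∧ col p.1.1 (stp p).1.1 = pickc p :=
    fun p => (hstep p).choose_spec.choose_spec
  let p₀ : St := ⟨⟨0, {m | 0 < m}⟩, Set.infinite_of_injective_forall_mem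
    (f := fun k : ℕ => k + 1) (fun i j h => by simpa using h) (fun k => by simp), fun m hm => hm⟩
  let F : ℕ → St := fun k => stp^[k] p₀
  have hFsucc : ∀ k, F (k+1) = stp (F k) := fun k => Function.iterate_succ_apply' _ _ _
  let a : ℕ → ℕ := fun k => (F k).1.1
  let κ : ℕ → C := fun k => pickc (F k)
  have hamono : StrictMono a := by
    apply strictMono_nat_of_lt_succ
    intro k
    have := (hspec (F k)).1
    rw [← hFsucc k] at this
    exact this
  have hsubs_le : ∀ k l, k ≤ l → (F l).1.2 ⊆ (F k).1.2 := by
    intro k l hkl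
    induction l with
    | zero => rw [Nat.le_zero.1 hkl]
    | succ m ih =>
      have hstepm : (F (m+1)).1.2 ⊆ (F m).1.2 := by
        have := (hspec (F m)).2.1
        rw [← hFsucc m] at this
        exact this
      rcases Nat.lt_or_ge k (m+1) with h1 | h1
      · exact hstepm.trans (ih (by omega))
      · rw [Nat.le_antisymm hkl h1]
  have hcol : ∀ i j, i < j → col (a i) (a j) = κ i := by
    intro i j hij
    rcases Nat.lt_or_ge (i+1) j with h1 | h1
    · -- j ≥ i + 2 : a j ∈ (F (j-1)).1.2 ⊆ (F (i+1)).1.2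
      obtain ⟨m, rfl⟩ : ∃ m, j = m + 1 := ⟨j - 1, by omega⟩
      have hmem : (F (m+1)).1.1 ∈ (F m).1.2 := by
        rw [hFsucc m]
        exact (hspec (F m)).2.2.1
      have h3 : (F (m+1)).1.1 ∈ (F (i+1)).1.2 := hsubs_le (i+1) m (by omega) hmem
      rw [hFsucc i] at h3
      exact (hspec (F i)).2.2.2.1 (F (m+1)).1.1 h3
    · have hj : j = i + 1 := by omega
      subst hj
      have := (hspec (F i)).2.2.2.2
      have h2 : a (i+1) = (stp (F i)).1.1 := by
        show (F (i+1)).1.1 = _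
        rw [hFsucc i]
      rw [h2]
      exact this
  -- pigeonhole on the colours κ
  obtain ⟨c, hcinf⟩ := inf_pigeon (Set.infinite_univ (α := ℕ)) κ
  have hpinf : {k | κ k = c}.Infinite := by
    apply hcinf.mono
    intro k hk
    exact hk.2
  refine ⟨a ∘ Nat.nth (fun k => κ k = c), hamono.comp (Nat.nth_strictMono hpinf), c, ?_⟩
  intro i j hij
  have h1 : Nat.nth (fun k => κ k = c) i < Nat.nth (fun k => κ k = c) j :=
    Nat.nth_strictMono hpinf hij
  have h2 := hcol _ _ h1
  show col (a (Nat.nth (fun k => κ k = c) i)) (a (Nat.nth (fun k => κ k = c) j)) = c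
  rw [h2]
  exact Nat.nth_mem_of_infinite hpinf i

end CCC

namespace CCC

variable {X : CCC}

/-- Every UBS contains an infinite descending chain. -/
lemma chain_in_UBS (hXc : X.NoInfiniteCrossing) {U : Set X.H} (hU : X.IsUBS U) :
    ∃ δ : Ch X, ∀ k, δ.c k ∈ U := by
  classical
  let e : ℕ ↪ U := hU.1.natEmbedding
  let col : ℕ → ℕ → Option (Bool × Bool) := fun i j =>
    if h : ∃ p : Bool × Bool, X.Hs (e i) p.1 ⊆ X.Hs (e j) p.2 then some h.choose else none
  obtain ⟨a, hamono, c, hc⟩ := inf_ramsey_pairs col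
  have hainj : Function.Injective a := hamono.injective
  have heinj : Function.Injective (fun i => (e (a i) : X.H)) := by
    intro i j hij
    exact hainj (e.injective (Subtype.ext hij))
  rcases c with _ | ⟨b, b'⟩
  · -- crossing colour : infinite pairwise-crossing family, contradiction
    exfalso
    have hpair : ∀ i j, i < j → X.Crosses (e (a i) : X.H) (e (a j) : X.H) := by
      intro i j hij
      have h1 := hc i j hij
      simp only [col] at h1
      split at h1
      · exact absurd h1 (by simp)
      · next h2 =>
        by_contra hcr
        obtain ⟨bb, bb', hsub⟩ := subset_of_not_crosses hcr
        exact h2 ⟨(bb, bb'), hsub⟩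
    apply Set.infinite_range_of_injective heinj
    apply hXc
    rintro h ⟨i, rfl⟩ h' ⟨j, rfl⟩ hne
    have hij : i ≠ j := fun hcon => hne (by rw [hcon])
    rcases Nat.lt_or_ge i j with h1 | h1
    · exact hpair i j h1
    · exact (hpair j i (by omega)).symm
  · -- nested colour
    have hsubs : ∀ i j, i < j → X.Hs (e (a i) : X.H) b ⊆ X.Hs (e (a j) : X.H) b' := by
      intro i j hij
      have h1 := hc i j hij
      simp only [col] at h1
      split at h1
      · next h2 =>
        have h3 : h2.choose = (b, b') := by
          simpa using h1
        have := h2.choose_spec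
        rw [h3] at this
        exact this
      · exact absurd h1 (by simp)
    have hne : ∀ i j, i ≠ j → (e (a i) : X.H) ≠ (e (a j) : X.H) := by
      intro i j hij hcon
      exact hij (heinj hcon)
    rcases Bool.eq_or_eq_not b' b with rfl | rfl
    · -- increasing chain: reverse orientation
      refine ⟨⟨fun k => (e (a k) : X.H), fun _ => !b', fun k => ?_, heinj⟩,
        fun k => (e (a k)).2⟩
      exact compl_subset_compl (hsubs k (k+1) (by omega))
    · -- facing colour: facing triple, contradiction
      exfalso
      have S01 := hsubs 0 1 (by omega)
      have S02 := hsubs 0 2 (by omega)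
      have S12 := hsubs 1 2 (by omega)
      set h₁ := (e (a 0) : X.H)
      set h₂ := (e (a 1) : X.H)
      set h₃ := (e (a 2) : X.H)
      apply hU.2.2.2 h₁ (e (a 0)).2 h₂ (e (a 1)).2 h₃ (e (a 2)).2
      refine ⟨hne 0 1 (by omega), hne 0 2 (by omega), hne 1 2 (by omega),
        !b, !b, !b, ?_, ?_, ?_, ?_, ?_, ?_⟩
      · exact inHalf_of_subset (c := !b) (hne 1 0 (by omega))
          (fun x hx => S01 (by rwa [Hs_not_not] at hx))
      · exact inHalf_of_subset (c := !b) (hne 2 0 (by omega))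
          (fun x hx => S02 (by rwa [Hs_not_not] at hx))
      · exact inHalf_of_subset (c := !b) (hne 0 1 (by omega))
          (fun x hx => compl_subset_compl S01 hx)
      · exact inHalf_of_subset (c := !b) (hne 2 1 (by omega))
          (fun x hx => S12 (by rwa [Hs_not_not] at hx))
      · exact inHalf_of_subset (c := !b) (hne 0 2 (by omega))
          (fun x hx => compl_subset_compl S02 hx)
      · exact inHalf_of_subset (c := !b) (hne 1 2 (by omega))
          (fun x hx => compl_subset_compl S12 hx)

end CCC

namespace CCC

variable {X : CCC}

section pchain

variable (hess : ∀ h : X.H, X.EssentialHyp h)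

lemma echain_ne_top {h₁ : X.H} {b₁ : Bool} {h₂ : X.H} {b₂ : Bool}
    (hsub : X.Hs h₂ b₂ ⊆ X.Hs h₁ b₁) (hne : h₂ ≠ h₁) (k : ℕ) :
    (echain hess h₂ b₂).c k ≠ h₁ := by
  intro hc
  have hnle : X.Hs ((echain hess h₂ b₂).c k) ((echain hess h₂ b₂).b k) ⊆ X.Hs h₂ b₂ :=
    (echain hess h₂ b₂).nested_le (Nat.zero_le k)
  rcases Bool.eq_or_eq_not ((echain hess h₂ b₂).b k) b₁ with hb | hb
  · apply hne
    apply hyp_eq_of_Hs_eq (Set.Subset.antisymm hsub ?_)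
    intro z hz
    apply hnle
    rw [mem_Hs, hc, hb]
    exact hz
  · obtain ⟨z, hz⟩ := Hs_nonempty (X := X) h₁ (!b₁)
    have hz2 : z ∈ X.Hs ((echain hess h₂ b₂).c k) ((echain hess h₂ b₂).b k) := by
      rw [mem_Hs, hc, hb]
      exact hz
    exact Hs_disj (hsub (hnle hz2)) hz

/-- A chain prepending `h₁` to an essential chain from `h₂ ⊆ h₁`. -/
noncomputable def pchain (h₁ : X.H) (b₁ : Bool) (h₂ : X.H) (b₂ : Bool)
    (hsub : X.Hs h₂ b₂ ⊆ X.Hs h₁ b₁) (hne : h₂ ≠ h₁) : Ch X where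
  c := fun n => Nat.casesOn n h₁ (fun k => (echain hess h₂ b₂).c k)
  b := fun n => Nat.casesOn n b₁ (fun k => (echain hess h₂ b₂).b k)
  nested := by
    intro k
    cases k with
    | zero => exact hsub
    | succ m => exact (echain hess h₂ b₂).nested m
  distinct := by
    intro a a' ha
    match a, a', ha with
    | 0, 0, _ => rfl
    | 0, (k+1), ha => exact absurd ha.symm (echain_ne_top hess hsub hne k)
    | (j+1), 0, ha => exact absurd ha (echain_ne_top hess hsub hne j)
    | (j+1), (k+1), ha => exact congrArg Nat.succ ((echain hess h₂ b₂).distinct ha)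

lemma pchain_tsub {h₁ : X.H} {b₁ : Bool} {h₂ : X.H} {b₂ : Bool}
    (hsub : X.Hs h₂ b₂ ⊆ X.Hs h₁ b₁) (hne : h₂ ≠ h₁) :
    Tset (echain hess h₂ b₂) ⊆ Tset (pchain hess h₁ b₁ h₂ b₂ hsub hne) := by
  apply Tset_mono
  · intro k
    exact mem_Tset_chain (pchain hess h₁ b₁ h₂ b₂ hsub hne) (k+1)
  · intro k
    exact (orT_chain (pchain hess h₁ b₁ h₂ b₂ hsub hne) (k+1)).symm

end pchain

lemma tail_Tset_subset (γ : Ch X) (t : ℕ) : Tset (γ.tail t) ⊆ Tset γ := by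
  apply Tset_mono
  · intro k
    exact mem_Tset_chain γ (t + k)
  · intro k
    exact (orT_chain γ (t + k)).symm

end CCC

namespace CCC

variable {X : CCC}

/-- Direction (ii): joins give products. -/
lemma join_to_product (hXc : X.NoInfiniteCrossing)
    (hess : ∀ h : X.H, X.EssentialHyp h) (hJ : X.JoinDecomp) : X.ProductDecomp := by
  classical
  obtain ⟨A₁, A₂, hA₁min, hA₂min, hA₁ne, hA₂ne, hcl₁, hcl₂, htot, hnoteq, hspan⟩ := hJ
  -- minimal UBSs based at a hyperplane via chains
  let CM : X.H → Set X.H → Prop := fun h M =>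
    X.MinUBS M ∧ ∃ γ : Ch X, γ.c 0 = h ∧ M ⊆ Tset γ
  have hCMex : ∀ (h : X.H) (b : Bool), ∃ M, X.MinUBS M ∧ M ⊆ Tset (echain hess h b) :=
    fun h b => exists_minUBS_in_Tset hXc _
  -- coherence of sides along a hyperplane
  have key : ∀ (δ δ' : Ch X) (N N' : Set X.H), N ⊆ Tset δ → N' ⊆ Tset δ' →
      N ∈ A₁ → N' ∈ A₂ →
      (∀ x, x ∈ X.Hs (δ.c 0) (δ.b 0) → x ∉ X.Hs (δ'.c 0) (δ'.b 0)) → False := by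
    intro δ δ' N N' hN hN' hN1 hN'2 hdd
    obtain ⟨W, hWUBS, hF1, hF2⟩ := hspan N hN1 N' hN'2
    exact no_span_facing hXc hN hN' hdd hWUBS hF1 hF2
  have hcoh : ∀ (h : X.H) (M M' : Set X.H), CM h M → CM h M' → M ∈ A₁ → M' ∈ A₂ → False := by
    rintro h M M' ⟨hMmin, γ, hγ0, hMsub⟩ ⟨hM'min, γ', hγ'0, hM'sub⟩ hM1 hM'2
    rcases Bool.eq_or_eq_not (γ'.b 0) (γ.b 0) with hbb | hbb
    · -- same top halfspace: use the opposite essential chain at h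
      obtain ⟨Mo, hMomin, hMosub⟩ := hCMex h (!(γ.b 0))
      rcases htot Mo hMomin with h1 | h2
      · refine key _ γ' Mo M' hMosub hM'sub h1 hM'2 ?_
        intro x hx hx'
        have hx2 : x ∈ X.Hs h (!(γ.b 0)) := hx
        have hx'2 : x ∈ X.Hs h (γ.b 0) := by
          rw [hγ'0, hbb] at hx'
          exact hx'
        exact Hs_disj hx'2 hx2
      · refine key γ _ M Mo hMsub hMosub hM1 h2 ?_
        intro x hx hx'
        have hx2 : x ∈ X.Hs h (γ.b 0) := by rw [hγ0] at hx; exact hx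
        have hx'2 : x ∈ X.Hs h (!(γ.b 0)) := hx'
        exact Hs_disj hx2 hx'2
    · refine key γ γ' M M' hMsub hM'sub hM1 hM'2 ?_
      intro x hx hx'
      have hx2 : x ∈ X.Hs h (γ.b 0) := by rw [hγ0] at hx; exact hx
      have hx'2 : x ∈ X.Hs h (!(γ.b 0)) := by rw [hγ'0, hbb] at hx'; exact hx'
      exact Hs_disj hx2 hx'2
  set H1 : Set X.H := {h | ∃ M, CM h M ∧ M ∈ A₁} with hH1
  set H2 : Set X.H := {h | ∃ M, CM h M ∧ M ∈ A₂} with hH2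
  have hcover : ∀ h : X.H, h ∈ H1 ∨ h ∈ H2 := by
    intro h
    obtain ⟨M, hMmin, hMsub⟩ := hCMex h true
    have hCMhM : CM h M := ⟨hMmin, echain hess h true, rfl, hMsub⟩
    rcases htot M hMmin with h1 | h2
    · exact Or.inl ⟨M, hCMhM, h1⟩
    · exact Or.inr ⟨M, hCMhM, h2⟩
  have hdisjH : ∀ h, h ∈ H1 → h ∈ H2 → False := by
    rintro h ⟨M, hCM, h1⟩ ⟨M', hCM', h2⟩
    exact hcoh h M M' hCM hCM' h1 h2
  have hcrossH : ∀ h₁ ∈ H1, ∀ h₂ ∈ H2, X.Crosses h₁ h₂ := by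
    intro g₁ hg₁ g₂ hg₂
    by_contra hnc
    have hg12 : g₁ ≠ g₂ := fun hc => hdisjH g₁ hg₁ (hc ▸ hg₂)
    obtain ⟨b, b', hsub⟩ := subset_of_not_crosses hnc
    obtain ⟨Ms, hMsmin, hMssub⟩ := hCMex g₁ b
    have hCM1 : CM g₁ Ms := ⟨hMsmin, echain hess g₁ b, rfl, hMssub⟩
    have hCM2 : CM g₂ Ms := ⟨hMsmin, pchain hess g₂ b' g₁ b hsub hg12, rfl,
      hMssub.trans (pchain_tsub hess hsub hg12)⟩
    obtain ⟨M₁, hCMM₁, hM₁A⟩ := hg₁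
    obtain ⟨M₂, hCMM₂, hM₂A⟩ := hg₂
    rcases htot Ms hMsmin with h1 | h2
    · exact hcoh g₂ Ms M₂ hCM2 hCMM₂ h1 hM₂A
    · exact hcoh g₁ M₁ Ms hCMM₁ hCM1 hM₁A h2
  -- chain stability in each side
  have hchainH1 : ∀ (h : X.H) (b : Bool), h ∈ H1 → ∀ k, (echain hess h b).c k ∈ H1 := by
    intro h b hh k
    obtain ⟨Mk, hMkmin, hMksub⟩ := exists_minUBS_in_Tset hXc ((echain hess h b).tail k)
    have hCMk : CM ((echain hess h b).c k) Mk := ⟨hMkmin, (echain hess h b).tail k, rfl, hMksub⟩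
    have hCMh : CM h Mk :=
      ⟨hMkmin, echain hess h b, rfl, hMksub.trans (tail_Tset_subset _ k)⟩
    obtain ⟨M₀, hCM₀, hM₀A⟩ := hh
    rcases htot Mk hMkmin with h1 | h2
    · exact ⟨Mk, hCMk, h1⟩
    · exact absurd (hcoh h M₀ Mk hCM₀ hCMh hM₀A h2) not_false
  have hchainH2 : ∀ (h : X.H) (b : Bool), h ∈ H2 → ∀ k, (echain hess h b).c k ∈ H2 := by
    intro h b hh k
    obtain ⟨Mk, hMkmin, hMksub⟩ := exists_minUBS_in_Tset hXc ((echain hess h b).tail k)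
    have hCMk : CM ((echain hess h b).c k) Mk := ⟨hMkmin, (echain hess h b).tail k, rfl, hMksub⟩
    have hCMh : CM h Mk :=
      ⟨hMkmin, echain hess h b, rfl, hMksub.trans (tail_Tset_subset _ k)⟩
    obtain ⟨M₀, hCM₀, hM₀A⟩ := hh
    rcases htot Mk hMkmin with h1 | h2
    · exact absurd (hcoh h Mk M₀ hCMh hCM₀ h1 hM₀A) not_false
    · exact ⟨Mk, hCMk, h2⟩
  -- nonemptiness
  have hHne : ∀ (A : Set (Set X.H)), (∀ U ∈ A, X.MinUBS U) → A.Nonempty →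
      (∀ U U', U ∈ A → X.MinUBS U' → X.AlmostEq U U' → U' ∈ A) →
      ∃ (h : X.H) (M : Set X.H), CM h M ∧ M ∈ A := by
    intro A hAmin ⟨U, hU⟩ hclA
    have hUmin := hAmin U hU
    obtain ⟨δ, hδmem⟩ := chain_in_UBS hXc hUmin.1
    have hTsub : Tset δ ⊆ U := insep_capture hUmin.1.2.1 hδmem
    obtain ⟨M', hM'min, hM'sub⟩ := exists_minUBS_in_Tset hXc δ
    have halm : X.AlmostEq U M' := hUmin.2 M' (hM'sub.trans hTsub) hM'min.1
    exact ⟨δ.c 0, M', ⟨hM'min, δ, rfl, hM'sub⟩, hclA U M' hU hM'min halm⟩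
  obtain ⟨h₁, M₁, hCM₁, hM₁⟩ := hHne A₁ hA₁min hA₁ne hcl₁
  obtain ⟨h₂, M₂, hCM₂, hM₂⟩ := hHne A₂ hA₂min hA₂ne hcl₂
  have hh₁ : h₁ ∈ H1 := ⟨M₁, hCM₁, hM₁⟩
  have hh₂ : h₂ ∈ H2 := ⟨M₂, hCM₂, hM₂⟩
  -- unboundedness
  have hub : ∀ (K : Set X.H) (h₀ : X.H), h₀ ∈ K →
      (∀ k, (echain hess h₀ true).c k ∈ K) →
      ∀ n : ℕ, ∃ x y : X.V, n ≤ ({h | X.side h x ≠ X.side h y} ∩ K).ncard := by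
    intro K h₀ hh₀ hstab n
    set γ := echain hess h₀ true with hγ
    obtain ⟨y, hy⟩ := Hs_nonempty (X := X) (γ.c 0) (!(γ.b 0))
    obtain ⟨x, hx⟩ := Hs_nonempty (X := X) (γ.c n) (γ.b n)
    refine ⟨x, y, ?_⟩
    have hsubim : γ.c '' (↑(Finset.range n) : Set ℕ) ⊆ {h | X.side h x ≠ X.side h y} ∩ K := by
      rintro g ⟨j, hj, rfl⟩
      simp only [Finset.coe_range, Set.mem_Iio] at hj
      constructor
      · have h1 : x ∈ X.Hs (γ.c j) (γ.b j) := γ.nested_le (le_of_lt hj) hx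
        have h2 : y ∈ X.Hs (γ.c j) (!(γ.b j)) :=
          compl_subset_compl (γ.nested_le (Nat.zero_le j)) hy
        rw [mem_Hs] at h1 h2
        simp only [Set.mem_setOf_eq]
        rw [h1, h2]
        simp
      · exact hstab j
    have h3 : (γ.c '' (↑(Finset.range n) : Set ℕ)).ncard = n := by
      rw [Set.ncard_image_of_injective _ γ.distinct, Set.ncard_coe_finset,
        Finset.card_range]
    rw [← h3]
    exact Set.ncard_le_ncard hsubim ((X.sep_fin x y).inter_of_left K)
  refine ⟨H1, H2, ?_, ?_, hcrossH, ?_, ?_⟩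
  · rw [Set.disjoint_left]
    intro h hh1 hh2
    exact hdisjH h hh1 hh2
  · apply Set.eq_univ_of_forall
    intro h
    rcases hcover h with h1 | h2
    · exact Or.inl h1
    · exact Or.inr h2
  · exact hub H1 h₁ hh₁ (hchainH1 h₁ true hh₁)
  · exact hub H2 h₂ hh₂ (hchainH2 h₂ true hh₂)

end CCC

/-- **Products and joins** (Theorem 4.25).  Let `X` be an essential CAT(0)
cube complex with no infinite family of pairwise-crossing hyperplanes.
(i) If `X` decomposes as a product of two unbounded convex subcomplexes then
`∂X` decomposes as a simplicial join of two disjoint nonempty subcomplexes;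
(ii) if moreover `X` is fully visible, the converse holds. -/
theorem products_and_joins (X : CCC) (hX : X.NoInfiniteCrossing)
    (hess : ∀ h : X.H, X.EssentialHyp h) :
    (X.ProductDecomp → X.JoinDecomp) ∧
      (X.FullyVisible → X.JoinDecomp → X.ProductDecomp) :=
  ⟨fun hP => CCC.product_to_join hX hess hP,
    fun _ hJ => CCC.join_to_product hX hess hJ⟩
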